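/- arXiv:2205.08910 — 2 statements merged into one kernel-verified Lean document; each statement's English description precedes it below -/
import Mathlib

section
/- For every ε ∈ [0,1): every rate R > H(X|Y) is ε-achievable for lossless source coding with side information, and no rate R < H(X|Y) is ε-achievable. -/
open Filter

noncomputable section

/-- `p` is a probability mass function on the finite alphabet `α`. -/
def IsPMF {α : Type*} [Fintype α] (p : α → ℝ) : Prop :=
  (∀ a, 0 ≤ p a) ∧ ∑ a, p a = 1

open Classical in
/-- Probability that the random variable `X` takes the value `a`, under the pmf `p`. -/
def probEq {Ω α : Type*} [Fintype Ω] (p : Ω → ℝ) (X : Ω → α) (a : α) : ℝ :=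
  ∑ ω, if X ω = a then p ω else 0

/-- Shannon entropy (base 2) of the random variable `X` under the pmf `p`. -/
def entOf {Ω α : Type*} [Fintype Ω] (p : Ω → ℝ) (X : Ω → α) : ℝ :=
  -∑ ω, p ω * Real.logb 2 (probEq p X (X ω))

/-- Conditional Shannon entropy `H(X | Y)` under the pmf `p`. -/
def condEntOf {Ω α β : Type*} [Fintype Ω] (p : Ω → ℝ) (X : Ω → α) (Y : Ω → β) : ℝ :=
  entOf p (fun ω => (X ω, Y ω)) - entOf p Y

/-- Mutual information `I(X ; Y)` under the pmf `p`. -/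
def miOf {Ω α β : Type*} [Fintype Ω] (p : Ω → ℝ) (X : Ω → α) (Y : Ω → β) : ℝ :=
  entOf p X + entOf p Y - entOf p (fun ω => (X ω, Y ω))

/-- Conditional mutual information `I(X ; Y | Z)` under the pmf `p`. -/
def condMIOf {Ω α β γ : Type*} [Fintype Ω] (p : Ω → ℝ) (X : Ω → α) (Y : Ω → β)
    (Z : Ω → γ) : ℝ :=
  condEntOf p X Z + condEntOf p Y Z - condEntOf p (fun ω => (X ω, Y ω)) Z

open Classical in
/-- Probability of the set `S` under the pmf `p`. -/
def probSet {Ω : Type*} [Fintype Ω] (p : Ω → ℝ) (S : Set Ω) : ℝ :=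
  ∑ ω, if ω ∈ S then p ω else 0

open Classical in
/-- Number of occurrences of the symbol `a` in the sequence `w`. -/
def Ncount {W : Type*} {n : ℕ} (w : Fin n → W) (a : W) : ℕ :=
  (Finset.univ.filter (fun i => w i = a)).card

/-- The strongly typical set `T_μ⁽ⁿ⁾(P)`: sequences whose empirical frequencies differ
from `P` by at most `μ` in every entry and that contain no symbol of zero probability. -/
def typicalSet {W : Type*} [Fintype W] (P : W → ℝ) (μ : ℝ) (n : ℕ) : Set (Fin n → W) :=
  {w | ∀ a, |((Ncount w a : ℝ)) / n - P a| ≤ μ ∧ (P a = 0 → Ncount w a = 0)}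

/-- The typicality parameter `μ_n = n^{-1/3}`. -/
def μseq (n : ℕ) : ℝ := (n : ℝ) ^ (-(1/3 : ℝ))

/-- The i.i.d. pmf on sequences of length `n`. -/
def iidSeq {W : Type*} [Fintype W] (P : W → ℝ) (n : ℕ) (w : Fin n → W) : ℝ :=
  ∏ i, P (w i)

/-- The i.i.d. pmf on pairs of sequences of length `n`. -/
def iidPair {X Y : Type*} [Fintype X] [Fintype Y] (P : X × Y → ℝ) (n : ℕ)
    (xy : (Fin n → X) × (Fin n → Y)) : ℝ :=
  ∏ i, P (xy.1 i, xy.2 i)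

/-- A pair of sequences viewed as one sequence over the product alphabet. -/
def pairSeq {X Y : Type*} {n : ℕ} (xy : (Fin n → X) × (Fin n → Y)) : Fin n → X × Y :=
  fun i => (xy.1 i, xy.2 i)

open Classical in
/-- Rate `R` is `ε`-achievable for lossless source coding of `X` with side information `Y`
at the decoder: there exist sequences (in the blocklength `n`) of encoders into messages
of `nR` bits (i.e. at most `2^{nR}` messages) and of decoders such that the probability
of a reconstruction error has `limsup` at most `ε`. -/
def slAchievable {X Y : Type*} [Fintype X] [Fintype Y] (P : X × Y → ℝ) (R ε : ℝ) : Prop :=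
  0 < R ∧
  ∃ (M : ℕ → ℕ) (φ : ∀ n : ℕ, (Fin n → X) → Fin (M n))
    (g : ∀ n : ℕ, Fin (M n) → (Fin n → Y) → (Fin n → X)),
    (∀ n, (M n : ℝ) ≤ 2 ^ ((n : ℝ) * R)) ∧
    limsup (fun n => ∑ xy : (Fin n → X) × (Fin n → Y),
        if g n (φ n xy.1) xy.2 ≠ xy.1 then iidPair P n xy else 0) atTop ≤ ε

/-- The conditional entropy `H(X|Y)` computed from the joint pmf `P_{XY}`. -/
def condEntBase {X Y : Type*} [Fintype X] [Fintype Y] (P : X × Y → ℝ) : ℝ :=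
  condEntOf P Prod.fst Prod.snd

namespace SW

/-! ### Generic i.i.d. lemmas -/

section Generic
variable {Ω : Type*} [Fintype Ω] {n : ℕ} {p : Ω → ℝ}

lemma sum_prod_eval (h : Fin n → Ω → ℝ) :
    ∑ z : Fin n → Ω, ∏ i, h i (z i) = ∏ i, ∑ ω, h i ω := by
  classical
  rw [Finset.prod_univ_sum, Fintype.piFinset_univ]

lemma iid_nonneg (hp : ∀ ω, 0 ≤ p ω) (z : Fin n → Ω) : 0 ≤ iidSeq p n z :=
  Finset.prod_nonneg fun i _ => hp (z i)

lemma iid_sum (h1 : ∑ ω, p ω = 1) : ∑ z : Fin n → Ω, iidSeq p n z = 1 := by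
  classical
  have := sum_prod_eval (n := n) (fun _ : Fin n => p)
  simp only [iidSeq, this, h1, Finset.prod_const_one]

lemma exp_pair (h1 : ∑ ω, p ω = 1) (g : Ω → ℝ) (hg0 : ∑ ω, p ω * g ω = 0)
    (i j : Fin n) :
    ∑ z : Fin n → Ω, iidSeq p n z * (g (z i) * g (z j))
      = if i = j then ∑ ω, p ω * g ω ^ 2 else 0 := by
  classical
  have key : ∀ z : Fin n → Ω, iidSeq p n z * (g (z i) * g (z j))
      = ∏ k, (fun k ω => p ω * (if k = i then g ω else 1) * (if k = j then g ω else 1)) k (z k) := by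
    intro z
    simp only []
    rw [Finset.prod_mul_distrib, Finset.prod_mul_distrib]
    simp [iidSeq, Finset.prod_ite_eq', mul_assoc]
  simp only [key]
  rw [sum_prod_eval (fun k ω => p ω * (if k = i then g ω else 1) * (if k = j then g ω else 1))]
  by_cases hij : i = j
  · subst hij
    rw [Finset.prod_eq_single i]
    · simp [sq, mul_assoc]
    · intro k _ hk; simp [hk, h1]
    · simp
  · rw [Finset.prod_eq_zero (Finset.mem_univ i)]
    · simp [hij]
    · simpa [hij] using hg0

lemma var_sum (h1 : ∑ ω, p ω = 1) (g : Ω → ℝ) (hg0 : ∑ ω, p ω * g ω = 0) :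
    ∑ z : Fin n → Ω, iidSeq p n z * (∑ i, g (z i)) ^ 2
      = n * ∑ ω, p ω * g ω ^ 2 := by
  classical
  have expand : ∀ z : Fin n → Ω,
      iidSeq p n z * (∑ i, g (z i)) ^ 2
        = ∑ i, ∑ j, iidSeq p n z * (g (z i) * g (z j)) := by
    intro z
    rw [sq, Finset.sum_mul_sum, Finset.mul_sum]
    refine Finset.sum_congr rfl fun i _ => ?_
    rw [Finset.mul_sum]
  simp only [expand]
  rw [Finset.sum_comm]
  have : ∀ i : Fin n, ∑ z : Fin n → Ω, ∑ j, iidSeq p n z * (g (z i) * g (z j))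
      = ∑ ω, p ω * g ω ^ 2 := by
    intro i
    rw [Finset.sum_comm]
    rw [Finset.sum_congr rfl fun j _ => exp_pair h1 g hg0 i j]
    simp
  rw [Finset.sum_congr rfl fun i _ => this i]
  simp [mul_comm]

open Classical in
lemma chebyshev (hp : ∀ ω, 0 ≤ p ω) (h1 : ∑ ω, p ω = 1) (g : Ω → ℝ)
    (hg0 : ∑ ω, p ω * g ω = 0) {t : ℝ} (ht : 0 < t) :
    ∑ z : Fin n → Ω, (if t < |∑ i, g (z i)| then iidSeq p n z else 0)
      ≤ n * (∑ ω, p ω * g ω ^ 2) / t ^ 2 := by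
  have step : ∀ z : Fin n → Ω,
      (if t < |∑ i, g (z i)| then iidSeq p n z else 0)
        ≤ iidSeq p n z * (∑ i, g (z i)) ^ 2 / t ^ 2 := by
    intro z
    have hq := iid_nonneg hp z
    split_ifs with h
    · have h2 : t ^ 2 ≤ (∑ i, g (z i)) ^ 2 := by
        have := sq_abs (∑ i, g (z i))
        nlinarith [h.le, abs_nonneg (∑ i, g (z i))]
      rw [← sub_nonneg]
      have heq : iidSeq p n z * (∑ i, g (z i)) ^ 2 / t ^ 2 - iidSeq p n z
          = iidSeq p n z * ((∑ i, g (z i)) ^ 2 - t ^ 2) / t ^ 2 := by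
        field_simp
      rw [heq]
      have h3 : (0:ℝ) ≤ (∑ i, g (z i)) ^ 2 - t ^ 2 := by linarith
      positivity
    · positivity
  calc ∑ z : Fin n → Ω, (if t < |∑ i, g (z i)| then iidSeq p n z else 0)
      ≤ ∑ z : Fin n → Ω, iidSeq p n z * (∑ i, g (z i)) ^ 2 / t ^ 2 :=
        Finset.sum_le_sum fun z _ => step z
    _ = (∑ z : Fin n → Ω, iidSeq p n z * (∑ i, g (z i)) ^ 2) / t ^ 2 := by
        rw [Finset.sum_div]
    _ = n * (∑ ω, p ω * g ω ^ 2) / t ^ 2 := by rw [var_sum h1 g hg0]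

open Classical in
lemma count_collision {Γ : Type*} [Fintype Γ] [DecidableEq Γ] {m : ℕ}
    {a b : Γ} (hab : a ≠ b) :
    ∑ φ : Γ → Fin m, (if φ b = φ a then (1:ℝ) else 0)
      = (m : ℝ) ^ (Fintype.card Γ - 1) := by
  classical
  rw [← Finset.sum_filter, Finset.sum_const, nsmul_eq_mul, mul_one]
  have hcard : (Finset.univ.filter fun φ : Γ → Fin m => φ b = φ a).card
      = Fintype.card {φ : Γ → Fin m // φ b = φ a} := (Fintype.card_subtype _).symm
  have E : {φ : Γ → Fin m // φ b = φ a} ≃ ({c : Γ // c ≠ b} → Fin m) :=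
    { toFun := fun φ c => φ.1 c.1
      invFun := fun ψ => ⟨fun c => if h : c = b then ψ ⟨a, hab⟩ else ψ ⟨c, h⟩, by
        simp [hab]⟩
      left_inv := by
        rintro ⟨φ, hφ⟩
        ext c
        by_cases h : c = b
        · subst h; simp [hφ]
        · simp [h]
      right_inv := by
        intro ψ
        ext c
        simp [c.2] }
  rw [hcard, Fintype.card_congr E, Fintype.card_fun, Fintype.card_fin]
  have : Fintype.card {c : Γ // c ≠ b} = Fintype.card Γ - 1 := by
    rw [Fintype.card_subtype_compl (p := fun c => c = b)]
    simp [Fintype.card_subtype_eq]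
  rw [this]
  push_cast [Nat.cast_pow]
  rfl

lemma tendsto_aux (V δ : ℝ) (hδ : 0 < δ) :
    Filter.Tendsto (fun n : ℕ => (n:ℝ) * V / ((n:ℝ) * δ) ^ 2 + (2:ℝ) ^ (-(n:ℝ) * δ))
      Filter.atTop (nhds 0) := by
  have h1 : Filter.Tendsto (fun n : ℕ => (n:ℝ) * V / ((n:ℝ) * δ) ^ 2)
      Filter.atTop (nhds 0) := by
    have heq : ∀ᶠ n : ℕ in Filter.atTop,
        (V / δ ^ 2) * (1 / (n:ℝ)) = (n:ℝ) * V / ((n:ℝ) * δ) ^ 2 := by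
      filter_upwards [Filter.eventually_ge_atTop 1] with n hn
      have hn0 : (n:ℝ) ≠ 0 := by positivity
      field_simp
    have := (tendsto_one_div_atTop_nhds_zero_nat).const_mul (V / δ ^ 2)
    rw [mul_zero] at this
    exact Filter.Tendsto.congr' heq this
  have h2 : Filter.Tendsto (fun n : ℕ => (2:ℝ) ^ (-(n:ℝ) * δ)) Filter.atTop (nhds 0) := by
    have heq : ∀ n : ℕ, ((2:ℝ) ^ (-δ)) ^ n = (2:ℝ) ^ (-(n:ℝ) * δ) := by
      intro n
      rw [← Real.rpow_natCast ((2:ℝ) ^ (-δ)) n, ← Real.rpow_mul (by norm_num)]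
      ring_nf
    have hlt : (2:ℝ) ^ (-δ) < 1 :=
      Real.rpow_lt_one_of_one_lt_of_neg (by norm_num) (by linarith)
    have hge : (0:ℝ) ≤ (2:ℝ) ^ (-δ) := Real.rpow_nonneg (by norm_num) _
    have := tendsto_pow_atTop_nhds_zero_of_lt_one hge hlt
    exact Filter.Tendsto.congr heq this
  have := h1.add h2
  simpa using this

end Generic

/-! ### Distribution-specific lemmas -/

variable {X Y : Type*} [Fintype X] [Fintype Y]

/-- The marginal pmf of the side information. -/
def pm (P : X × Y → ℝ) (y : Y) : ℝ := ∑ x, P (x, y)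

/-- The conditional information density `-log₂ P(x|y)`. -/
def fI (P : X × Y → ℝ) (ω : X × Y) : ℝ := Real.logb 2 (pm P ω.2) - Real.logb 2 (P ω)

variable {P : X × Y → ℝ} {n : ℕ}

lemma pm_nonneg (hP : IsPMF P) (y : Y) : 0 ≤ pm P y :=
  Finset.sum_nonneg fun _ _ => hP.1 _

lemma pm_sum (hP : IsPMF P) : ∑ y, pm P y = 1 := by
  rw [← hP.2, Fintype.sum_prod_type, Finset.sum_comm]; rfl

lemma le_pm (hP : IsPMF P) (ω : X × Y) : P ω ≤ pm P ω.2 := by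
  have := Finset.single_le_sum (f := fun x => P (x, ω.2))
    (fun x _ => hP.1 _) (Finset.mem_univ ω.1)
  simpa [pm] using this

lemma probEq_pair (a : X × Y) :
    probEq P (fun ω => (Prod.fst ω, Prod.snd ω)) a = P a := by
  classical
  simp [probEq]

lemma probEq_snd (y : Y) : probEq P Prod.snd y = pm P y := by
  classical
  rw [probEq, Fintype.sum_prod_type]
  simp [pm]

lemma mean_eq (hP : IsPMF P) : ∑ ω, P ω * fI P ω = condEntBase P := by
  classical
  rw [condEntBase, condEntOf, entOf, entOf]
  have h1 : ∀ ω : X × Y, probEq P (fun ω => (Prod.fst ω, Prod.snd ω))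
      ((fun ω => (Prod.fst ω, Prod.snd ω)) ω) = P ω := fun ω => probEq_pair _
  have h2 : ∀ ω : X × Y, probEq P Prod.snd (Prod.snd ω) = pm P ω.2 := fun ω => probEq_snd _
  simp only [h1, h2, fI]
  simp only [mul_sub, Finset.sum_sub_distrib, Finset.sum_neg_distrib]
  ring

lemma condEntBase_nonneg (hP : IsPMF P) : 0 ≤ ∑ ω, P ω * fI P ω := by
  refine Finset.sum_nonneg fun ω _ => ?_
  rcases eq_or_lt_of_le (hP.1 ω) with h | h
  · rw [← h, zero_mul]
  · refine mul_nonneg (hP.1 ω) ?_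
    rw [fI, sub_nonneg]
    exact Real.logb_le_logb_of_le (by norm_num) h (le_pm hP ω)

lemma iid_eq (hP : IsPMF P) (z : Fin n → X × Y) (hz : ∀ i, P (z i) ≠ 0) :
    iidSeq P n z = (∏ i, pm P (z i).2) * (2 : ℝ) ^ (-(∑ i, fI P (z i))) := by
  have term : ∀ i, P (z i) = pm P (z i).2 * (2 : ℝ) ^ (-(fI P (z i))) := by
    intro i
    have hpos : 0 < P (z i) := lt_of_le_of_ne (hP.1 _) (Ne.symm (hz i))
    have hpm : 0 < pm P (z i).2 := lt_of_lt_of_le hpos (le_pm hP _)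
    rw [fI, neg_sub, Real.rpow_sub (by norm_num),
      Real.rpow_logb (by norm_num) (by norm_num) hpos,
      Real.rpow_logb (by norm_num) (by norm_num) hpm]
    field_simp
  rw [iidSeq]
  calc ∏ i, P (z i) = ∏ i, pm P (z i).2 * (2 : ℝ) ^ (-(fI P (z i))) :=
        Finset.prod_congr rfl fun i _ => term i
    _ = (∏ i, pm P (z i).2) * ∏ i, (2 : ℝ) ^ (-(fI P (z i))) := Finset.prod_mul_distrib
    _ = (∏ i, pm P (z i).2) * (2 : ℝ) ^ (-(∑ i, fI P (z i))) := by
        rw [← Real.rpow_sum_of_pos (by norm_num), ← Finset.sum_neg_distrib]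

lemma iid_le_of (hP : IsPMF P) (z : Fin n → X × Y) {a : ℝ} (ha : a ≤ ∑ i, fI P (z i)) :
    iidSeq P n z ≤ (∏ i, pm P (z i).2) * (2 : ℝ) ^ (-a) := by
  by_cases hz : ∀ i, P (z i) ≠ 0
  · rw [iid_eq hP z hz]
    refine mul_le_mul_of_nonneg_left ?_ (Finset.prod_nonneg fun i _ => pm_nonneg hP _)
    exact Real.rpow_le_rpow_of_exponent_le (by norm_num) (by linarith)
  · push_neg at hz
    obtain ⟨i, hi⟩ := hz
    have : iidSeq P n z = 0 := Finset.prod_eq_zero (Finset.mem_univ i) hi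
    rw [this]
    exact mul_nonneg (Finset.prod_nonneg fun j _ => pm_nonneg hP _)
      (Real.rpow_nonneg (by norm_num) _)

lemma iid_ge_of (hP : IsPMF P) (z : Fin n → X × Y) (hz : ∀ i, P (z i) ≠ 0)
    {a : ℝ} (ha : ∑ i, fI P (z i) ≤ a) :
    (∏ i, pm P (z i).2) * (2 : ℝ) ^ (-a) ≤ iidSeq P n z := by
  rw [iid_eq hP z hz]
  refine mul_le_mul_of_nonneg_left ?_ (Finset.prod_nonneg fun i _ => pm_nonneg hP _)
  exact Real.rpow_le_rpow_of_exponent_le (by norm_num) (by linarith)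

lemma sum_x_iidPair (y : Fin n → Y) :
    ∑ x : Fin n → X, iidPair P n (x, y) = ∏ i, pm P (y i) := by
  have := sum_prod_eval (n := n) (fun i (a : X) => P (a, y i))
  simpa [iidPair, pm] using this

lemma sum_qY (hP : IsPMF P) : ∑ y : Fin n → Y, ∏ i, pm P (y i) = 1 := by
  have := sum_prod_eval (n := n) (fun _ (b : Y) => pm P b)
  rw [this]
  simp [pm_sum hP]

lemma pairSeq_bij : Function.Bijective (@pairSeq X Y n) := by
  constructor
  · intro a b h
    have h1 : ∀ i, (a.1 i, a.2 i) = (b.1 i, b.2 i) := fun i => congrFun h i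
    ext i
    · exact congrArg Prod.fst (h1 i)
    · exact congrArg Prod.snd (h1 i)
  · intro z
    exact ⟨(fun i => (z i).1, fun i => (z i).2), rfl⟩

lemma iidPair_nonneg (hP : IsPMF P) (xy : (Fin n → X) × (Fin n → Y)) :
    0 ≤ iidPair P n xy := Finset.prod_nonneg fun i _ => hP.1 _

lemma iid_sum' (hP : IsPMF P) : ∑ xy : (Fin n → X) × (Fin n → Y), iidPair P n xy = 1 := by
  have hb := Fintype.sum_bijective (@pairSeq X Y n) pairSeq_bij
    (fun xy => iidPair P n xy) (fun z => iidSeq P n z) (fun xy => rfl)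
  rw [hb, iid_sum hP.2]

/-- `H(X|Y)` written as an expectation of the information density. -/
def condEntBase' (P : X × Y → ℝ) : ℝ := ∑ ω, P ω * fI P ω

lemma condEntBase'_def : condEntBase' P = ∑ ω, P ω * fI P ω := rfl

lemma condEntBase'_eq (hP : IsPMF P) : condEntBase' P = condEntBase P := mean_eq hP

lemma condEntBase'_nonneg (hP : IsPMF P) : 0 ≤ condEntBase' P := condEntBase_nonneg hP

open Classical in
lemma chebyshev_pair (hP : IsPMF P) {t : ℝ} (ht : 0 < t) :
    ∑ xy : (Fin n → X) × (Fin n → Y),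
        (if t < |∑ i, (fI P (xy.1 i, xy.2 i) - condEntBase' P)|
         then iidPair P n xy else 0)
      ≤ (n : ℝ) * (∑ ω, P ω * (fI P ω - condEntBase' P) ^ 2) / t ^ 2 := by
  set H := condEntBase' P with hH
  set g : X × Y → ℝ := fun ω => fI P ω - H with hg
  have hg0 : ∑ ω, P ω * g ω = 0 := by
    simp only [hg, mul_sub, Finset.sum_sub_distrib, ← Finset.sum_mul, hP.2, one_mul]
    rw [hH, condEntBase'_def, sub_self]
  have hb := Fintype.sum_bijective (@pairSeq X Y n) pairSeq_bij
    (fun xy => if t < |∑ i, (fI P (xy.1 i, xy.2 i) - H)| then iidPair P n xy else 0)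
    (fun z => if t < |∑ i, g (z i)| then iidSeq P n z else 0)
    (fun xy => rfl)
  rw [hb]
  exact chebyshev hP.1 hP.2 g hg0 ht
open Classical in
/-- The conditionally typical set. -/
def Tset (P : X × Y → ℝ) (H δ : ℝ) (n : ℕ) (y : Fin n → Y) : Finset (Fin n → X) :=
  Finset.univ.filter fun x => (∀ i, P (x i, y i) ≠ 0) ∧
    |∑ i, (fI P (x i, y i) - H)| ≤ (n : ℝ) * δ

lemma mem_Tset {H δ : ℝ} {y : Fin n → Y} {x : Fin n → X} :
    x ∈ Tset P H δ n y ↔ (∀ i, P (x i, y i) ≠ 0) ∧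
      |∑ i, (fI P (x i, y i) - H)| ≤ (n:ℝ) * δ := by
  classical
  simp only [Tset, Finset.mem_filter, Finset.mem_univ, true_and]

set_option maxHeartbeats 1000000 in
open Classical in
lemma Tset_card (hP : IsPMF P) {δ : ℝ} (y : Fin n → Y) :
    ((Tset P (condEntBase' P) δ n y).card : ℝ)
      ≤ (2:ℝ) ^ ((n:ℝ) * (condEntBase' P + δ)) := by
  set H := condEntBase' P
  rcases Finset.eq_empty_or_nonempty (Tset P H δ n y) with he | ⟨x0, hx0⟩
  · rw [he]; simp; positivity
  · have hmem : ∀ x ∈ Tset P H δ n y, (∀ i, P (x i, y i) ≠ 0) ∧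
        |∑ i, (fI P (x i, y i) - H)| ≤ (n : ℝ) * δ := by
      intro x hx
      exact mem_Tset.mp hx
    -- positive conditional probability of the marginal
    have hq0 : 0 < iidPair P n (x0, y) := by
      refine Finset.prod_pos fun i _ => lt_of_le_of_ne (hP.1 _) ?_
      exact Ne.symm ((hmem x0 hx0).1 i)
    have hqY : 0 < ∏ i, pm P (y i) := by
      have h1 : iidPair P n (x0, y) ≤ ∑ x : Fin n → X, iidPair P n (x, y) :=
        Finset.single_le_sum (f := fun x => iidPair P n (x, y))
          (fun x _ => iidPair_nonneg hP _) (Finset.mem_univ x0)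
      rw [sum_x_iidPair] at h1
      exact lt_of_lt_of_le hq0 h1
    -- each member has conditional prob at least 2^{-n(H+δ)}
    have hlow : ∀ x ∈ Tset P H δ n y,
        (∏ i, pm P (y i)) * (2:ℝ) ^ (-((n:ℝ) * (H + δ))) ≤ iidPair P n (x, y) := by
      intro x hx
      obtain ⟨hz, htyp⟩ := hmem x hx
      have hsum : ∑ i, fI P (x i, y i) ≤ (n:ℝ) * (H + δ) := by
        have h2 : ∑ i, (fI P (x i, y i) - H) ≤ (n:ℝ) * δ := (abs_le.mp htyp).2
        have h3 : ∑ i, (fI P (x i, y i) - H)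
            = (∑ i, fI P (x i, y i)) - (n:ℝ) * H := by
          rw [Finset.sum_sub_distrib]
          simp [mul_comm]
        rw [h3] at h2
        linarith
      have := iid_ge_of hP (pairSeq (x, y)) hz (a := (n:ℝ) * (H + δ)) hsum
      exact this
    have hsumle : (Tset P H δ n y).card •
        ((∏ i, pm P (y i)) * (2:ℝ) ^ (-((n:ℝ) * (H + δ))))
          ≤ ∏ i, pm P (y i) := by
      calc (Tset P H δ n y).card • ((∏ i, pm P (y i)) * (2:ℝ) ^ (-((n:ℝ) * (H + δ))))
          = ∑ _x ∈ Tset P H δ n y, ((∏ i, pm P (y i)) * (2:ℝ) ^ (-((n:ℝ) * (H + δ)))) := by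
            rw [Finset.sum_const]
        _ ≤ ∑ x ∈ Tset P H δ n y, iidPair P n (x, y) :=
            Finset.sum_le_sum hlow
        _ ≤ ∑ x : Fin n → X, iidPair P n (x, y) :=
            Finset.sum_le_sum_of_subset_of_nonneg (Finset.subset_univ _)
              (fun x _ _ => iidPair_nonneg hP _)
        _ = ∏ i, pm P (y i) := sum_x_iidPair y
    have hrpos : (0:ℝ) < (2:ℝ) ^ (-((n:ℝ) * (H + δ))) := Real.rpow_pos_of_pos (by norm_num) _
    rw [nsmul_eq_mul] at hsumle
    have h1 : ((Tset P H δ n y).card : ℝ) * (2:ℝ) ^ (-((n:ℝ) * (H + δ))) ≤ 1 := by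
      nlinarith [hsumle, hqY, hrpos,
        (Nat.cast_nonneg (Tset P H δ n y).card : (0:ℝ) ≤ _)]
    have h2 : ((Tset P H δ n y).card : ℝ) ≤ 1 / (2:ℝ) ^ (-((n:ℝ) * (H + δ))) :=
      (le_div_iff₀ hrpos).mpr h1
    calc ((Tset P H δ n y).card : ℝ) ≤ 1 / (2:ℝ) ^ (-((n:ℝ) * (H + δ))) := h2
      _ = (2:ℝ) ^ ((n:ℝ) * (H + δ)) := by
          rw [one_div, ← Real.rpow_neg (by norm_num : (0:ℝ) ≤ 2), neg_neg]

open Classical in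
def decode (P : X × Y → ℝ) (H δ : ℝ) {n m : ℕ} [Nonempty X] (φ : (Fin n → X) → Fin m)
    (k : Fin m) (y : Fin n → Y) : Fin n → X :=
  if h : ∃ x, x ∈ Tset P H δ n y ∧ φ x = k ∧
      (∀ x' ∈ Tset P H δ n y, φ x' = k → x' = x) then h.choose
  else Classical.arbitrary _

lemma decode_eq {H δ : ℝ} [Nonempty X] {m : ℕ} (φ : (Fin n → X) → Fin m)
    (y : Fin n → Y) (x : Fin n → X) (hx : x ∈ Tset P H δ n y)
    (huniq : ∀ x' ∈ Tset P H δ n y, φ x' = φ x → x' = x) :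
    decode P H δ φ (φ x) y = x := by
  have h : ∃ x₀, x₀ ∈ Tset P H δ n y ∧ φ x₀ = φ x ∧
      (∀ x' ∈ Tset P H δ n y, φ x' = φ x → x' = x₀) := ⟨x, hx, rfl, huniq⟩
  rw [decode, dif_pos h]
  exact huniq _ h.choose_spec.1 h.choose_spec.2.1

open Classical in
lemma exists_code (hP : IsPMF P) [Nonempty X] (n m : ℕ) (hm : 1 ≤ m) (δ : ℝ) :
    ∃ (φ : (Fin n → X) → Fin m) (g : Fin m → (Fin n → Y) → (Fin n → X)),
      (∑ xy : (Fin n → X) × (Fin n → Y),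
          if g (φ xy.1) xy.2 ≠ xy.1 then iidPair P n xy else 0)
        ≤ (∑ xy : (Fin n → X) × (Fin n → Y),
            if (n:ℝ) * δ < |∑ i, (fI P (xy.1 i, xy.2 i) - condEntBase' P)|
            then iidPair P n xy else 0)
          + (2:ℝ) ^ ((n:ℝ) * (condEntBase' P + δ)) / m := by
  classical
  set H := condEntBase' P with hH
  set A := (∑ xy : (Fin n → X) × (Fin n → Y),
      if (n:ℝ) * δ < |∑ i, (fI P (xy.1 i, xy.2 i) - H)| then iidPair P n xy else 0) with hA
  have hA0 : 0 ≤ A := Finset.sum_nonneg fun xy _ => by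
    split_ifs
    · exact iidPair_nonneg hP xy
    · exact le_rfl
  haveI : NeZero m := ⟨by omega⟩
  set K := Fintype.card (Fin n → X) with hK
  have hK1 : 1 ≤ K := Fintype.card_pos
  -- collision indicator sum
  set coll : ((Fin n → X) → Fin m) → ((Fin n → X) × (Fin n → Y)) → ℝ :=
    fun φ xy => ∑ x' ∈ (Tset P H δ n xy.2).erase xy.1,
      (if φ x' = φ xy.1 then (1:ℝ) else 0) with hcoll
  have coll_nonneg : ∀ φ xy, 0 ≤ coll φ xy := fun φ xy =>
    Finset.sum_nonneg fun x' _ => by positivity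
  -- pointwise bound
  have pointwise : ∀ (φ : (Fin n → X) → Fin m) (xy : (Fin n → X) × (Fin n → Y)),
      (if decode P H δ φ (φ xy.1) xy.2 ≠ xy.1 then iidPair P n xy else 0)
        ≤ (if (n:ℝ) * δ < |∑ i, (fI P (xy.1 i, xy.2 i) - H)| then iidPair P n xy else 0)
          + iidPair P n xy * coll φ xy := by
    intro φ xy
    obtain ⟨x, y⟩ := xy
    have hq := iidPair_nonneg hP (x, y)
    by_cases hdec : decode P H δ φ (φ x) y ≠ x
    · rw [if_pos hdec]
      by_cases hxT : x ∈ Tset P H δ n y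
      · -- there must be a collision
        have hnu : ¬ (∀ x' ∈ Tset P H δ n y, φ x' = φ x → x' = x) := by
          intro hu
          exact hdec (decode_eq φ y x hxT hu)
        push_neg at hnu
        obtain ⟨x', hx'T, hφ, hne⟩ := hnu
        have hcol : (1:ℝ) ≤ coll φ (x, y) := by
          have hmem : x' ∈ (Tset P H δ n y).erase x := Finset.mem_erase.mpr ⟨hne, hx'T⟩
          have := Finset.single_le_sum
            (f := fun x'' => (if φ x'' = φ x then (1:ℝ) else 0))
            (fun x'' _ => by positivity) hmem
          simpa [hcoll, hφ] using this
        have : iidPair P n (x, y) ≤ iidPair P n (x, y) * coll φ (x, y) := by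
          nlinarith
        have h0 : (0:ℝ) ≤ (if (n:ℝ) * δ < |∑ i, (fI P (x i, y i) - H)|
            then iidPair P n (x, y) else 0) := by positivity
        calc iidPair P n (x, y) ≤ iidPair P n (x, y) * coll φ (x, y) := this
          _ ≤ _ := by linarith
      · -- x not typical
        have hxT' : ¬ ((∀ i, P (x i, y i) ≠ 0) ∧
            |∑ i, (fI P (x i, y i) - H)| ≤ (n : ℝ) * δ) := by
          intro hc
          exact hxT (mem_Tset.mpr hc)
        by_cases habs : (n:ℝ) * δ < |∑ i, (fI P (x i, y i) - H)|
        · rw [if_pos habs]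
          have := mul_nonneg hq (coll_nonneg φ (x, y))
          linarith
        · -- some zero-probability symbol, q = 0
          push_neg at habs
          have hz : ∃ i, P (x i, y i) = 0 := by
            by_contra hno
            push_neg at hno
            exact hxT' ⟨hno, habs⟩
          obtain ⟨i, hi⟩ := hz
          have : iidPair P n (x, y) = 0 := Finset.prod_eq_zero (Finset.mem_univ i) hi
          rw [this]
          split_ifs <;> simp
    · rw [if_neg hdec]
      have := mul_nonneg hq (coll_nonneg φ (x, y))
      split_ifs with h
      · linarith [iidPair_nonneg hP (x, y)]
      · linarith
  -- average over φ
  have avg : ∑ φ : (Fin n → X) → Fin m,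
      (∑ xy : (Fin n → X) × (Fin n → Y),
        if decode P H δ φ (φ xy.1) xy.2 ≠ xy.1 then iidPair P n xy else 0)
      ≤ (m:ℝ) ^ K * (A + (2:ℝ) ^ ((n:ℝ) * (H + δ)) / m) := by
    have step1 : ∀ φ : (Fin n → X) → Fin m,
        (∑ xy : (Fin n → X) × (Fin n → Y),
          if decode P H δ φ (φ xy.1) xy.2 ≠ xy.1 then iidPair P n xy else 0)
        ≤ A + ∑ xy : (Fin n → X) × (Fin n → Y), iidPair P n xy * coll φ xy := by
      intro φ
      calc _ ≤ ∑ xy : (Fin n → X) × (Fin n → Y),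
            ((if (n:ℝ) * δ < |∑ i, (fI P (xy.1 i, xy.2 i) - H)| then iidPair P n xy else 0)
              + iidPair P n xy * coll φ xy) := Finset.sum_le_sum fun xy _ => pointwise φ xy
        _ = A + ∑ xy : (Fin n → X) × (Fin n → Y), iidPair P n xy * coll φ xy := by
            rw [Finset.sum_add_distrib]
    calc ∑ φ : (Fin n → X) → Fin m, (∑ xy : (Fin n → X) × (Fin n → Y),
          if decode P H δ φ (φ xy.1) xy.2 ≠ xy.1 then iidPair P n xy else 0)
        ≤ ∑ φ : (Fin n → X) → Fin m,
            (A + ∑ xy : (Fin n → X) × (Fin n → Y), iidPair P n xy * coll φ xy) :=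
          Finset.sum_le_sum fun φ _ => step1 φ
      _ = (m:ℝ) ^ K * A + ∑ xy : (Fin n → X) × (Fin n → Y),
            iidPair P n xy * ∑ x' ∈ (Tset P H δ n xy.2).erase xy.1,
              (∑ φ : (Fin n → X) → Fin m, if φ x' = φ xy.1 then (1:ℝ) else 0) := by
          rw [Finset.sum_add_distrib, Finset.sum_const, Finset.card_univ, Fintype.card_fun,
            Fintype.card_fin, nsmul_eq_mul]
          push_cast
          congr 1
          rw [Finset.sum_comm]
          refine Finset.sum_congr rfl fun xy _ => ?_
          simp only [hcoll]
          rw [← Finset.mul_sum, Finset.sum_comm, Finset.mul_sum]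
      _ ≤ (m:ℝ) ^ K * A + ∑ xy : (Fin n → X) × (Fin n → Y),
            iidPair P n xy * ((2:ℝ) ^ ((n:ℝ) * (H + δ)) * (m:ℝ) ^ (K - 1)) := by
          refine add_le_add le_rfl (Finset.sum_le_sum fun xy _ => ?_)
          refine mul_le_mul_of_nonneg_left ?_ (iidPair_nonneg hP xy)
          calc ∑ x' ∈ (Tset P H δ n xy.2).erase xy.1,
                (∑ φ : (Fin n → X) → Fin m, if φ x' = φ xy.1 then (1:ℝ) else 0)
              = ∑ x' ∈ (Tset P H δ n xy.2).erase xy.1, (m:ℝ) ^ (K - 1) := by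
                refine Finset.sum_congr rfl fun x' hx' => ?_
                exact count_collision (Finset.ne_of_mem_erase hx').symm
            _ = ((Tset P H δ n xy.2).erase xy.1).card * (m:ℝ) ^ (K - 1) := by
                rw [Finset.sum_const, nsmul_eq_mul]
            _ ≤ (2:ℝ) ^ ((n:ℝ) * (H + δ)) * (m:ℝ) ^ (K - 1) := by
                refine mul_le_mul_of_nonneg_right ?_ (by positivity)
                calc (((Tset P H δ n xy.2).erase xy.1).card : ℝ)
                    ≤ ((Tset P H δ n xy.2).card : ℝ) := by
                      exact_mod_cast Finset.card_le_card (Finset.erase_subset _ _)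
                  _ ≤ _ := Tset_card hP xy.2
      _ = (m:ℝ) ^ K * (A + (2:ℝ) ^ ((n:ℝ) * (H + δ)) / m) := by
          rw [← Finset.sum_mul, iid_sum' hP, one_mul]
          have hm0 : (m:ℝ) ≠ 0 := by positivity
          have : (m:ℝ) ^ K = (m:ℝ) ^ (K - 1) * m := by
            rw [← pow_succ, Nat.sub_add_cancel hK1]
          rw [mul_add, this]
          field_simp
  -- extract a good code
  have hne : (Finset.univ : Finset ((Fin n → X) → Fin m)).Nonempty :=
    Finset.univ_nonempty
  obtain ⟨φ0, _, hφ0⟩ := Finset.exists_le_of_sum_le hne (by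
    calc ∑ φ : (Fin n → X) → Fin m,
          (∑ xy : (Fin n → X) × (Fin n → Y),
            if decode P H δ φ (φ xy.1) xy.2 ≠ xy.1 then iidPair P n xy else 0)
        ≤ (m:ℝ) ^ K * (A + (2:ℝ) ^ ((n:ℝ) * (H + δ)) / m) := avg
      _ = ∑ _φ : (Fin n → X) → Fin m, (A + (2:ℝ) ^ ((n:ℝ) * (H + δ)) / m) := by
          rw [Finset.sum_const, Finset.card_univ, Fintype.card_fun, Fintype.card_fin,
            nsmul_eq_mul]
          push_cast
          ring)
  exact ⟨φ0, decode P H δ φ0, hφ0⟩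
open Classical in
lemma converse (hP : IsPMF P) {R ε : ℝ} (hε1 : ε < 1) (hRH : R < condEntBase' P) :
    ¬ slAchievable P R ε := by
  rintro ⟨hR0, M, φ, g, hM, hlim⟩
  set H := condEntBase' P with hH
  set δ : ℝ := (H - R) / 2 with hδdef
  have hδ : 0 < δ := by simp [hδdef]; linarith
  set V : ℝ := ∑ ω, P ω * (fI P ω - H) ^ 2 with hV
  set err : ℕ → ℝ := fun n => ∑ xy : (Fin n → X) × (Fin n → Y),
      if g n (φ n xy.1) xy.2 ≠ xy.1 then iidPair P n xy else 0 with herr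
  have err_le_one : ∀ n, err n ≤ 1 := by
    intro n
    rw [herr, ← iid_sum' (n := n) hP]
    refine Finset.sum_le_sum fun xy _ => ?_
    split_ifs
    · exact le_rfl
    · exact iidPair_nonneg hP xy
  -- main per-n lower bound on error (for n ≥ 1)
  have key : ∀ n : ℕ, 1 ≤ n →
      1 - ((n:ℝ) * V / ((n:ℝ) * δ) ^ 2 + (2:ℝ) ^ (-(n:ℝ) * δ)) ≤ err n := by
    intro n hn
    have hnpos : (0:ℝ) < (n:ℝ) * δ := by positivity
    -- correct probability
    set corr : ℝ := ∑ xy : (Fin n → X) × (Fin n → Y),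
        if g n (φ n xy.1) xy.2 = xy.1 then iidPair P n xy else 0 with hcorr
    have hsplit : err n + corr = 1 := by
      rw [herr, hcorr, ← Finset.sum_add_distrib, ← iid_sum' (n := n) hP]
      refine Finset.sum_congr rfl fun xy _ => ?_
      by_cases h : g n (φ n xy.1) xy.2 = xy.1 <;> simp [h]
    -- split correct into typical and atypical parts
    have hcorr_le : corr ≤ ((n:ℝ) * V / ((n:ℝ) * δ) ^ 2) + (2:ℝ) ^ (-(n:ℝ) * δ) := by
      have pointwise : ∀ xy : (Fin n → X) × (Fin n → Y),
          (if g n (φ n xy.1) xy.2 = xy.1 then iidPair P n xy else 0)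
            ≤ (if (n:ℝ) * δ < |∑ i, (fI P (xy.1 i, xy.2 i) - H)| then iidPair P n xy else 0)
              + (if g n (φ n xy.1) xy.2 = xy.1 ∧
                  ¬ ((n:ℝ) * δ < |∑ i, (fI P (xy.1 i, xy.2 i) - H)|)
                 then iidPair P n xy else 0) := by
        intro xy
        have hq := iidPair_nonneg hP xy
        by_cases h1 : g n (φ n xy.1) xy.2 = xy.1
        · by_cases h2 : (n:ℝ) * δ < |∑ i, (fI P (xy.1 i, xy.2 i) - H)|
          · rw [if_pos h1, if_pos h2, if_neg (fun hc => hc.2 h2)]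
            linarith
          · rw [if_pos h1, if_neg h2, if_pos ⟨h1, h2⟩]
            linarith
        · rw [if_neg h1]
          split_ifs <;> linarith
      have hbound2 : ∑ xy : (Fin n → X) × (Fin n → Y),
          (if g n (φ n xy.1) xy.2 = xy.1 ∧
              ¬ ((n:ℝ) * δ < |∑ i, (fI P (xy.1 i, xy.2 i) - H)|)
           then iidPair P n xy else 0) ≤ (2:ℝ) ^ (-(n:ℝ) * δ) := by
        -- reorganize as sum over y then x
        rw [Fintype.sum_prod_type, Finset.sum_comm]
        have inner : ∀ y : Fin n → Y,
            ∑ x : Fin n → X, (if g n (φ n x) y = x ∧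
                ¬ ((n:ℝ) * δ < |∑ i, (fI P (x i, y i) - H)|)
               then iidPair P n (x, y) else 0)
              ≤ (M n : ℝ) * ((∏ i, pm P (y i)) * (2:ℝ) ^ (-((n:ℝ) * (H - δ)))) := by
          intro y
          have perx : ∀ x : Fin n → X, (if g n (φ n x) y = x ∧
                ¬ ((n:ℝ) * δ < |∑ i, (fI P (x i, y i) - H)|)
               then iidPair P n (x, y) else 0)
              ≤ (if g n (φ n x) y = x
                 then (∏ i, pm P (y i)) * (2:ℝ) ^ (-((n:ℝ) * (H - δ))) else 0) := by
            intro x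
            have hrhs0 : (0:ℝ) ≤ (∏ i, pm P (y i)) * (2:ℝ) ^ (-((n:ℝ) * (H - δ))) := by
              have := Finset.prod_nonneg (fun i (_ : i ∈ Finset.univ) => pm_nonneg hP (y i))
              positivity
            by_cases h1 : g n (φ n x) y = x
            · by_cases h2 : (n:ℝ) * δ < |∑ i, (fI P (x i, y i) - H)|
              · rw [if_neg (fun hc => hc.2 h2), if_pos h1]
                exact hrhs0
              · simp only [h1, h2, not_false_eq_true, and_self, if_true, true_and]
                push_neg at h2
                have hges : (n:ℝ) * (H - δ) ≤ ∑ i, fI P (x i, y i) := by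
                  have habs := (abs_le.mp h2).1
                  have hsub : ∑ i, (fI P (x i, y i) - H)
                      = (∑ i, fI P (x i, y i)) - (n:ℝ) * H := by
                    rw [Finset.sum_sub_distrib]
                    simp [mul_comm]
                  rw [hsub] at habs
                  linarith [habs]
                exact iid_le_of hP (pairSeq (x, y)) hges
            · simp [h1]
          calc ∑ x : Fin n → X, (if g n (φ n x) y = x ∧
                ¬ ((n:ℝ) * δ < |∑ i, (fI P (x i, y i) - H)|)
               then iidPair P n (x, y) else 0)
              ≤ ∑ x : Fin n → X, (if g n (φ n x) y = x
                 then (∏ i, pm P (y i)) * (2:ℝ) ^ (-((n:ℝ) * (H - δ))) else 0) :=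
                Finset.sum_le_sum fun x _ => perx x
            _ = ((Finset.univ.filter fun x : Fin n → X => g n (φ n x) y = x).card : ℝ)
                  * ((∏ i, pm P (y i)) * (2:ℝ) ^ (-((n:ℝ) * (H - δ)))) := by
                rw [← Finset.sum_filter, Finset.sum_const, nsmul_eq_mul]
            _ ≤ (M n : ℝ) * ((∏ i, pm P (y i)) * (2:ℝ) ^ (-((n:ℝ) * (H - δ)))) := by
                refine mul_le_mul_of_nonneg_right ?_ ?_
                · have hinj : Set.InjOn (fun x => φ n x)
                      ↑(Finset.univ.filter fun x : Fin n → X => g n (φ n x) y = x) := by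
                    intro a ha b hb hab
                    simp only [Finset.coe_filter, Set.mem_setOf_eq] at ha hb
                    calc a = g n (φ n a) y := ha.2.symm
                      _ = g n (φ n b) y := congrArg (fun k => g n k y) hab
                      _ = b := hb.2
                  have := Finset.card_le_card_of_injOn (fun x => φ n x)
                    (fun x _ => Finset.mem_univ _) hinj
                  calc ((Finset.univ.filter fun x : Fin n → X => g n (φ n x) y = x).card : ℝ)
                      ≤ ((Finset.univ : Finset (Fin (M n))).card : ℝ) := by exact_mod_cast this
                    _ = (M n : ℝ) := by simp
                · have := Finset.prod_nonneg (fun i (_ : i ∈ Finset.univ) => pm_nonneg hP (y i))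
                  positivity
        calc ∑ y : Fin n → Y, ∑ x : Fin n → X, (if g n (φ n x) y = x ∧
                ¬ ((n:ℝ) * δ < |∑ i, (fI P (x i, y i) - H)|)
               then iidPair P n (x, y) else 0)
            ≤ ∑ y : Fin n → Y, (M n : ℝ) * ((∏ i, pm P (y i)) * (2:ℝ) ^ (-((n:ℝ) * (H - δ)))) :=
              Finset.sum_le_sum fun y _ => inner y
          _ = (M n : ℝ) * (2:ℝ) ^ (-((n:ℝ) * (H - δ))) := by
              rw [← Finset.mul_sum]
              have : ∑ y : Fin n → Y, (∏ i, pm P (y i)) * (2:ℝ) ^ (-((n:ℝ) * (H - δ)))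
                  = (2:ℝ) ^ (-((n:ℝ) * (H - δ))) := by
                rw [← Finset.sum_mul, sum_qY hP, one_mul]
              rw [this]
          _ ≤ (2:ℝ) ^ ((n:ℝ) * R) * (2:ℝ) ^ (-((n:ℝ) * (H - δ))) := by
              refine mul_le_mul_of_nonneg_right (hM n) ?_
              positivity
          _ = (2:ℝ) ^ (-(n:ℝ) * δ) := by
              rw [← Real.rpow_add (by norm_num)]
              congr 1
              rw [hδdef]
              ring
      calc corr ≤ (∑ xy : (Fin n → X) × (Fin n → Y),
            (if (n:ℝ) * δ < |∑ i, (fI P (xy.1 i, xy.2 i) - H)| then iidPair P n xy else 0))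
            + ∑ xy : (Fin n → X) × (Fin n → Y),
              (if g n (φ n xy.1) xy.2 = xy.1 ∧
                  ¬ ((n:ℝ) * δ < |∑ i, (fI P (xy.1 i, xy.2 i) - H)|)
               then iidPair P n xy else 0) := by
            rw [hcorr, ← Finset.sum_add_distrib]
            exact Finset.sum_le_sum fun xy _ => pointwise xy
        _ ≤ ((n:ℝ) * V / ((n:ℝ) * δ) ^ 2) + (2:ℝ) ^ (-(n:ℝ) * δ) := by
            refine add_le_add ?_ hbound2
            have := chebyshev_pair (n := n) hP hnpos
            calc _ ≤ (n:ℝ) * (∑ ω, P ω * (fI P ω - H) ^ 2) / ((n:ℝ) * δ) ^ 2 := this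
              _ = (n:ℝ) * V / ((n:ℝ) * δ) ^ 2 := by rw [hV]
    linarith [hsplit, hcorr_le]
  -- derive contradiction
  set t : ℝ := (ε + 1) / 2 with ht
  have hεt : ε < t := by rw [ht]; linarith
  have ht1 : t < 1 := by rw [ht]; linarith
  have hev : ∀ᶠ n in atTop, t ≤ err n := by
    have htend := tendsto_aux V δ hδ
    have hsmall : ∀ᶠ n : ℕ in atTop,
        (n:ℝ) * V / ((n:ℝ) * δ) ^ 2 + (2:ℝ) ^ (-(n:ℝ) * δ) < 1 - t := by
      have h1t : (0:ℝ) < 1 - t := by linarith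
      exact htend.eventually (eventually_lt_nhds h1t) |>.mono (fun n h => h)
    filter_upwards [hsmall, eventually_ge_atTop 1] with n h1 h2
    have := key n h2
    linarith
  have : t ≤ limsup err atTop :=
    le_limsup_of_frequently_le hev.frequently (isBoundedUnder_of ⟨1, fun n => err_le_one n⟩)
  have : t ≤ ε := le_trans this hlim
  linarith

open Classical in
lemma achievability (hP : IsPMF P) {R ε : ℝ} (hε0 : 0 ≤ ε) (hRH : condEntBase P < R) :
    slAchievable P R ε := by
  classical
  have hne : Nonempty (X × Y) := by
    by_contra h
    rw [not_nonempty_iff] at h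
    have h2 := hP.2
    rw [Finset.univ_eq_empty, Finset.sum_empty] at h2
    norm_num at h2
  haveI : Nonempty X := ⟨hne.some.1⟩
  have hH0 : 0 ≤ condEntBase' P := condEntBase'_nonneg hP
  have hRH' : condEntBase' P < R := by rw [condEntBase'_eq hP]; exact hRH
  have hR0 : 0 < R := lt_of_le_of_lt hH0 hRH'
  set H : ℝ := condEntBase' P with hH
  set δ : ℝ := (R - H) / 4 with hδdef
  have hδ : 0 < δ := by rw [hδdef]; linarith
  have hH2δ : 0 ≤ H + 2 * δ := by linarith
  have hHR : H + 4 * δ = R := by rw [hδdef]; ring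
  set M : ℕ → ℕ :=
    fun n => min ⌈(2:ℝ) ^ ((n:ℝ) * (H + 2 * δ))⌉₊ ⌊(2:ℝ) ^ ((n:ℝ) * R)⌋₊ with hMdef
  have hM1 : ∀ n, 1 ≤ M n := by
    intro n
    rw [hMdef]
    refine le_min ?_ ?_
    · exact Nat.one_le_ceil_iff.mpr (Real.rpow_pos_of_pos (by norm_num) _)
    · refine Nat.le_floor ?_
      have h1 : (1:ℝ) ≤ (2:ℝ) ^ ((n:ℝ) * R) :=
        Real.one_le_rpow (by norm_num) (by positivity)
      exact_mod_cast h1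
  have hMle : ∀ n, (M n : ℝ) ≤ (2:ℝ) ^ ((n:ℝ) * R) := by
    intro n
    calc (M n : ℝ) ≤ (⌊(2:ℝ) ^ ((n:ℝ) * R)⌋₊ : ℝ) := by
          exact_mod_cast min_le_right _ _
      _ ≤ _ := Nat.floor_le (by positivity)
  have hcode := fun n => exists_code hP n (M n) (hM1 n) δ
  choose φ g hφg using hcode
  refine ⟨hR0, M, φ, g, hMle, ?_⟩
  set V : ℝ := ∑ ω, P ω * (fI P ω - H) ^ 2 with hV
  set err : ℕ → ℝ := fun n => ∑ xy : (Fin n → X) × (Fin n → Y),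
      if g n (φ n xy.1) xy.2 ≠ xy.1 then iidPair P n xy else 0 with herr
  have herr0 : ∀ n, 0 ≤ err n := by
    intro n
    refine Finset.sum_nonneg fun xy _ => ?_
    split_ifs
    · exact iidPair_nonneg hP xy
    · exact le_rfl
  have hev2 : ∀ᶠ n : ℕ in Filter.atTop, (1:ℝ) ≤ 2 * (n:ℝ) * δ := by
    have h2δ : (0:ℝ) < 2 * δ := by linarith
    have htop : Filter.Tendsto (fun n : ℕ => (n:ℝ) * (2 * δ)) Filter.atTop Filter.atTop :=
      Filter.Tendsto.atTop_mul_const h2δ tendsto_natCast_atTop_atTop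
    filter_upwards [htop.eventually_ge_atTop 1] with n hn
    linarith [hn]
  have hbound : ∀ᶠ n : ℕ in Filter.atTop,
      err n ≤ (n:ℝ) * V / ((n:ℝ) * δ) ^ 2 + (2:ℝ) ^ (-(n:ℝ) * δ) := by
    filter_upwards [Filter.eventually_ge_atTop 1, hev2] with n hn hn2
    have hn1 : (1:ℝ) ≤ (n:ℝ) := by exact_mod_cast hn
    have hnpos : (0:ℝ) < (n:ℝ) * δ := by nlinarith
    have hA := chebyshev_pair (n := n) hP hnpos
    -- lower bound on M n
    have hkey : (2:ℝ) ^ ((n:ℝ) * (H + 2 * δ)) + 1 ≤ (2:ℝ) ^ ((n:ℝ) * R) := by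
      have e1 : (2:ℝ) ^ ((n:ℝ) * R)
          = (2:ℝ) ^ ((n:ℝ) * (H + 2 * δ)) * (2:ℝ) ^ (2 * (n:ℝ) * δ) := by
        rw [← Real.rpow_add (by norm_num)]
        congr 1
        rw [← hHR]
        ring
      have e2 : (2:ℝ) ≤ (2:ℝ) ^ (2 * (n:ℝ) * δ) := by
        calc (2:ℝ) = (2:ℝ) ^ (1:ℝ) := by rw [Real.rpow_one]
          _ ≤ _ := Real.rpow_le_rpow_of_exponent_le (by norm_num) hn2
      have e3 : (1:ℝ) ≤ (2:ℝ) ^ ((n:ℝ) * (H + 2 * δ)) :=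
        Real.one_le_rpow (by norm_num) (by positivity)
      nlinarith [e3, e2]
    have hMge : (2:ℝ) ^ ((n:ℝ) * (H + 2 * δ)) ≤ (M n : ℝ) := by
      have hc : (2:ℝ) ^ ((n:ℝ) * (H + 2 * δ)) ≤ (⌈(2:ℝ) ^ ((n:ℝ) * (H + 2 * δ))⌉₊ : ℝ) :=
        Nat.le_ceil _
      have hf : (2:ℝ) ^ ((n:ℝ) * (H + 2 * δ)) ≤ (⌊(2:ℝ) ^ ((n:ℝ) * R)⌋₊ : ℝ) := by
        have hlt := Nat.sub_one_lt_floor ((2:ℝ) ^ ((n:ℝ) * R))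
        linarith
      rw [hMdef]
      push_cast [Nat.cast_min]
      exact le_min hc hf
    have hdiv : (2:ℝ) ^ ((n:ℝ) * (H + δ)) / (M n : ℝ) ≤ (2:ℝ) ^ (-(n:ℝ) * δ) := by
      have hM0 : (0:ℝ) < (M n : ℝ) := by exact_mod_cast hM1 n
      rw [div_le_iff₀ hM0]
      calc (2:ℝ) ^ ((n:ℝ) * (H + δ))
          = (2:ℝ) ^ (-(n:ℝ) * δ) * (2:ℝ) ^ ((n:ℝ) * (H + 2 * δ)) := by
            rw [← Real.rpow_add (by norm_num)]
            congr 1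
            ring
        _ ≤ (2:ℝ) ^ (-(n:ℝ) * δ) * (M n : ℝ) :=
            mul_le_mul_of_nonneg_left hMge (Real.rpow_nonneg (by norm_num) _)
    calc err n ≤ (∑ xy : (Fin n → X) × (Fin n → Y),
          if (n:ℝ) * δ < |∑ i, (fI P (xy.1 i, xy.2 i) - H)| then iidPair P n xy else 0)
          + (2:ℝ) ^ ((n:ℝ) * (H + δ)) / (M n : ℝ) := hφg n
      _ ≤ (n:ℝ) * V / ((n:ℝ) * δ) ^ 2 + (2:ℝ) ^ (-(n:ℝ) * δ) := add_le_add hA hdiv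
  have htend : Filter.Tendsto err Filter.atTop (nhds 0) :=
    squeeze_zero' (Filter.Eventually.of_forall herr0) hbound (tendsto_aux V δ hδ)
  rw [show err = (fun n => ∑ xy : (Fin n → X) × (Fin n → Y),
      if g n (φ n xy.1) xy.2 ≠ xy.1 then iidPair P n xy else 0) from herr] at htend
  calc Filter.limsup (fun n => ∑ xy : (Fin n → X) × (Fin n → Y),
        if g n (φ n xy.1) xy.2 ≠ xy.1 then iidPair P n xy else 0) Filter.atTop
      = 0 := htend.limsup_eq
    _ ≤ ε := hε0

end SW

/-- For every `ε ∈ [0,1)`: every rate `R > H(X|Y)` is `ε`-achievable for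
lossless source coding with side information, and no rate `R < H(X|Y)` is `ε`-achievable. -/
theorem lossless_side_information_strong_converse
    {X Y : Type*} [Fintype X] [Fintype Y] (P : X × Y → ℝ) (hP : IsPMF P)
    (ε : ℝ) (hε0 : 0 ≤ ε) (hε1 : ε < 1) :
    (∀ R : ℝ, condEntBase P < R → slAchievable P R ε) ∧
    (∀ R : ℝ, 0 < R → R < condEntBase P → ¬ slAchievable P R ε) := by
  constructor
  · intro R hR
    exact SW.achievability hP hε0 hR
  · intro R hR0 hRH
    refine SW.converse hP hε1 ?_
    rw [SW.condEntBase'_eq hP]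
    exact hRH
end
end

section
/- Message-entropy bound under the K-hop change of measure: with U_ℓ := (M̃_ℓ, Ỹ₀^{T−1},…,Ỹ_k^{T−1}, T), for every ℓ ∈ {1,…,k} there is a correction term o(n) with o(n)/n → 0 such that H(M̃_ℓ) = n·I(Ỹ₀,…,Ỹ_k; U_ℓ) + log Δ_k + o(n), and consequently n·R_ℓ ≥ H(M̃_ℓ) ≥ n·I(U_ℓ; Ỹ_{ℓ−1}) + log Δ_k + o(n). -/
open Filter

noncomputable section

section KHop

variable (k : ℕ) (Y : ℕ → Type) [∀ i, Fintype (Y i)] [∀ i, Nonempty (Y i)]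

/-- The index `j` viewed as an element of `Fin (k+1)`. -/
def idxLo (j : Fin k) : Fin (k + 1) := ⟨(j : ℕ), Nat.lt_succ_of_lt j.isLt⟩

/-- The index `j+1` viewed as an element of `Fin (k+1)`. -/
def idxHi (j : Fin k) : Fin (k + 1) := ⟨(j : ℕ) + 1, Nat.succ_lt_succ j.isLt⟩

variable (P : (∀ i : Fin (k + 1), Y i) → ℝ)

/-- The i.i.d. law of the source tuple `(Y₀ⁿ,…,Y_kⁿ)` under hypothesis `H = 0`. -/
def iidK (n : ℕ) (ys : ∀ i : Fin (k + 1), Fin n → Y i) : ℝ :=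
  ∏ t : Fin n, P (fun i => ys i t)

open Classical in
/-- The marginal pmf of `Y_i` under `P`. -/
def margK (i : Fin (k + 1)) (c : Y i) : ℝ :=
  ∑ y : ∀ i : Fin (k + 1), Y i, if y i = c then P y else 0

/-- The product of the marginals `P_{Y₀}·P_{Y₁}⋯P_{Y_k}`. -/
def prodMargK (y : ∀ i : Fin (k + 1), Y i) : ℝ := ∏ i, margK k Y P i (y i)

/-- The i.i.d. law of the source tuple under hypothesis `H = 1` (product of marginals). -/
def iidQK (n : ℕ) (ys : ∀ i : Fin (k + 1), Fin n → Y i) : ℝ :=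
  ∏ t : Fin n, prodMargK k Y P (fun i => ys i t)

open Classical in
/-- The pairwise marginal `P_{Y_j Y_{j+1}}` of `P`. -/
def pairMargK (j : Fin k) (a : Y (j : ℕ)) (b : Y ((j : ℕ) + 1)) : ℝ :=
  ∑ y : ∀ i : Fin (k + 1), Y i, if y (idxLo k j) = a ∧ y (idxHi k j) = b then P y else 0

open Classical in
/-- `P` forms the Markov chain `Y₀ → Y₁ → ⋯ → Y_k`. -/
def IsMarkovChainK : Prop :=
  ∀ y : ∀ i : Fin (k + 1), Y i,
    P y * ∏ i ∈ Finset.univ.filter (fun i : Fin (k + 1) => 0 < (i : ℕ) ∧ (i : ℕ) < k),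
        margK k Y P i (y i)
      = ∏ j : Fin k, pairMargK k Y P j (y (idxLo k j)) (y (idxHi k j))

/-- Extension of a source tuple to all natural indices (junk beyond `k`). -/
def extendTup (n : ℕ) (ys : ∀ i : Fin (k + 1), Fin n → Y i) (ℓ : ℕ) : Fin n → Y ℓ :=
  if h : ℓ < k + 1 then ys ⟨ℓ, h⟩ else fun _ => Classical.arbitrary (Y ℓ)

/-- The messages computed recursively from the encoders:
`msgRec φ ys' ℓ` is the message `M_{ℓ+1}`. -/
def msgRec (n : ℕ) (φ : ∀ ℓ : ℕ, (Fin n → Y ℓ) → ℕ → ℕ)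
    (ys' : ∀ ℓ : ℕ, Fin n → Y ℓ) : ℕ → ℕ
  | 0 => φ 0 (ys' 0) 0
  | (ℓ + 1) => φ (ℓ + 1) (ys' (ℓ + 1)) (msgRec n φ ys' ℓ)

/-- A source tuple viewed as one sequence over the product alphabet. -/
def tupleSeq {n : ℕ} (ys : ∀ i : Fin (k + 1), Fin n → Y i) :
    Fin n → (∀ i : Fin (k + 1), Y i) :=
  fun t i => ys i t

/-- The acceptance region `A_k` of the decision center `R_k`: the tuples on which the
guess is `Ĥ_k = 0` (decision `false`). -/
def acceptSet (n : ℕ) (φ : ∀ ℓ : ℕ, (Fin n → Y ℓ) → ℕ → ℕ)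
    (g : (Fin n → Y k) → ℕ → Bool) : Set (∀ i : Fin (k + 1), Fin n → Y i) :=
  {ys | g (extendTup k Y n ys k) (msgRec Y n φ (extendTup k Y n ys) (k - 1)) = false}

/-- The set `D_k`: the acceptance region intersected with the strongly typical set. -/
def DsetCM (n : ℕ) (φ : ∀ ℓ : ℕ, (Fin n → Y ℓ) → ℕ → ℕ)
    (g : (Fin n → Y k) → ℕ → Bool) : Set (∀ i : Fin (k + 1), Fin n → Y i) :=
  acceptSet k Y n φ g ∩ {ys | tupleSeq k Y ys ∈ typicalSet P (μseq n) n}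

/-- `Δ_k = Pr[(Y₀ⁿ,…,Y_kⁿ) ∈ D_k]` under `H = 0`. -/
def DeltaCM (n : ℕ) (φ : ∀ ℓ : ℕ, (Fin n → Y ℓ) → ℕ → ℕ)
    (g : (Fin n → Y k) → ℕ → Bool) : ℝ :=
  probSet (iidK k Y P n) (DsetCM k Y P n φ g)

open Classical in
/-- The change-of-measure pmf of `(Ỹ₀ⁿ,…,Ỹ_kⁿ)`: the `H = 0` law conditioned on `D_k`. -/
def ptildeCM (n : ℕ) (φ : ∀ ℓ : ℕ, (Fin n → Y ℓ) → ℕ → ℕ)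
    (g : (Fin n → Y k) → ℕ → Bool) (ys : ∀ i : Fin (k + 1), Fin n → Y i) : ℝ :=
  if ys ∈ DsetCM k Y P n φ g then iidK k Y P n ys / DeltaCM k Y P n φ g else 0

/-- The pmf of `((Ỹ₀ⁿ,…,Ỹ_kⁿ), T)` with `T` uniform on `{1,…,n}` independent of the rest. -/
def pfullCM (n : ℕ) (φ : ∀ ℓ : ℕ, (Fin n → Y ℓ) → ℕ → ℕ)
    (g : (Fin n → Y k) → ℕ → Bool)
    (ω : (∀ i : Fin (k + 1), Fin n → Y i) × Fin n) : ℝ :=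
  ptildeCM k Y P n φ g ω.1 / n

/-- The random variable `M̃_{j+1}` (the message of hop `j+1` applied to the tilde sources). -/
def MtilRV (n : ℕ) (φ : ∀ ℓ : ℕ, (Fin n → Y ℓ) → ℕ → ℕ) (j : ℕ)
    (ω : (∀ i : Fin (k + 1), Fin n → Y i) × Fin n) : ℕ :=
  msgRec Y n φ (extendTup k Y n ω.1) j

open Classical in
/-- The prefixes `(Ỹ₀^{T−1},…,Ỹ_k^{T−1})` as a random variable. -/
def prefixAll (n : ℕ) (ω : (∀ i : Fin (k + 1), Fin n → Y i) × Fin n) :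
    ∀ i : Fin (k + 1), Fin n → Option (Y i) :=
  fun i t => if (t : ℕ) < (ω.2 : ℕ) then some (ω.1 i t) else none

/-- The auxiliary random variable `U_{j+1} := (M̃_{j+1}, Ỹ₀^{T−1},…,Ỹ_k^{T−1}, T)`. -/
def UvarCM (n : ℕ) (φ : ∀ ℓ : ℕ, (Fin n → Y ℓ) → ℕ → ℕ) (j : ℕ)
    (ω : (∀ i : Fin (k + 1), Fin n → Y i) × Fin n) :
    ℕ × (∀ i : Fin (k + 1), Fin n → Option (Y i)) × Fin n :=
  (MtilRV k Y n φ j ω, prefixAll k Y n ω, ω.2)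

/-- The type-I error probability `α_{k,n} = Pr[Ĥ_k = 1 | H = 0]`. -/
def alphaCM (n : ℕ) (φ : ∀ ℓ : ℕ, (Fin n → Y ℓ) → ℕ → ℕ)
    (g : (Fin n → Y k) → ℕ → Bool) : ℝ :=
  probSet (iidK k Y P n) ((acceptSet k Y n φ g)ᶜ)

/-- The type-II error probability `β_{k,n} = Pr[Ĥ_k = 0 | H = 1]`. -/
def betaCM (n : ℕ) (φ : ∀ ℓ : ℕ, (Fin n → Y ℓ) → ℕ → ℕ)
    (g : (Fin n → Y k) → ℕ → Bool) : ℝ :=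
  probSet (iidQK k Y P n) (acceptSet k Y n φ g)

end KHop


section EntropyBasics
open Classical
variable {Ω : Type*} [Fintype Ω] {α β γ : Type*}

lemma probEq_nonneg (p : Ω → ℝ) (hp : ∀ ω, 0 ≤ p ω) (X : Ω → α) (a : α) :
    0 ≤ probEq p X a := by
  refine Finset.sum_nonneg fun ω _ => ?_
  split_ifs <;> simp [hp ω]

lemma le_probEq (p : Ω → ℝ) (hp : ∀ ω, 0 ≤ p ω) (X : Ω → α) (ω : Ω) :
    p ω ≤ probEq p X (X ω) := by
  have h := Finset.single_le_sum
    (f := fun ω' => if X ω' = X ω then p ω' else 0)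
    (fun i _ => by split_ifs <;> simp [hp i]) (Finset.mem_univ ω)
  simpa [probEq] using h

lemma probEq_mono (p : Ω → ℝ) (hp : ∀ ω, 0 ≤ p ω) {X : Ω → α} {Z : Ω → β} {x : α} {z : β}
    (h : ∀ ω, X ω = x → Z ω = z) : probEq p X x ≤ probEq p Z z := by
  refine Finset.sum_le_sum fun ω _ => ?_
  by_cases hx : X ω = x
  · simp [hx, h ω hx]
  · simp [hx]; split_ifs <;> simp [hp ω]

lemma probEq_congr_point (p : Ω → ℝ) {X : Ω → α} {Z : Ω → β} {ω : Ω}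
    (h : ∀ ω', X ω' = X ω ↔ Z ω' = Z ω) : probEq p X (X ω) = probEq p Z (Z ω) := by
  refine Finset.sum_congr rfl fun ω' _ => ?_
  rw [if_congr (h ω') rfl rfl]

lemma entOf_congr (p : Ω → ℝ) {X : Ω → α} {Z : Ω → β}
    (h : ∀ ω ω', X ω = X ω' ↔ Z ω = Z ω') : entOf p X = entOf p Z := by
  unfold entOf
  congr 1
  refine Finset.sum_congr rfl fun ω _ => ?_
  rw [probEq_congr_point p (fun ω' => h ω' ω)]

lemma sum_probEq_mul (p : Ω → ℝ) (X : Ω → α) (s : Finset α) (hs : ∀ ω, X ω ∈ s) (f : α → ℝ) :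
    ∑ a ∈ s, probEq p X a * f a = ∑ ω, p ω * f (X ω) := by
  unfold probEq
  calc ∑ a ∈ s, (∑ ω, if X ω = a then p ω else 0) * f a
      = ∑ a ∈ s, ∑ ω, (if X ω = a then p ω * f a else 0) := by
        refine Finset.sum_congr rfl fun a _ => ?_
        rw [Finset.sum_mul]
        refine Finset.sum_congr rfl fun ω _ => ?_
        split_ifs <;> simp
    _ = ∑ ω, ∑ a ∈ s, (if X ω = a then p ω * f (X ω) else 0) := by
        rw [Finset.sum_comm]
        refine Finset.sum_congr rfl fun a _ => Finset.sum_congr rfl fun ω _ => ?_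
        split_ifs with h <;> simp [h]
    _ = ∑ ω, p ω * f (X ω) := by
        refine Finset.sum_congr rfl fun ω _ => ?_
        rw [Finset.sum_ite_eq s (X ω) (fun _ => p ω * f (X ω)), if_pos (hs ω)]

lemma sum_probEq (p : Ω → ℝ) (X : Ω → α) (s : Finset α) (hs : ∀ ω, X ω ∈ s) :
    ∑ a ∈ s, probEq p X a = ∑ ω, p ω := by
  have h := sum_probEq_mul p X s hs (fun _ => 1)
  simpa using h

lemma entOf_eq_sum (p : Ω → ℝ) (X : Ω → α) (s : Finset α) (hs : ∀ ω, X ω ∈ s) :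
    entOf p X = -∑ a ∈ s, probEq p X a * Real.logb 2 (probEq p X a) := by
  unfold entOf
  rw [sum_probEq_mul p X s hs (fun a => Real.logb 2 (probEq p X a))]

end EntropyBasics

section MaxEnt
open Classical
variable {Ω : Type*} [Fintype Ω] {α β γ : Type*}

lemma entOf_le_logb_card (p : Ω → ℝ) (hp : ∀ ω, 0 ≤ p ω) (hsum : ∑ ω, p ω = 1)
    (X : Ω → α) (S : Finset α) (hX : ∀ ω, X ω ∈ S) (hS : 0 < S.card) :
    entOf p X ≤ Real.logb 2 S.card := by
  have hq0 : ∀ a, 0 ≤ probEq p X a := probEq_nonneg p hp X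
  have hqs : ∑ a ∈ S, probEq p X a = 1 := by rw [sum_probEq p X S hX, hsum]
  have hcard : (0:ℝ) < S.card := by exact_mod_cast hS
  have key : ∀ a ∈ S, probEq p X a - 1 / S.card
      ≤ probEq p X a * (Real.log S.card + Real.log (probEq p X a)) := by
    intro a _
    rcases (hq0 a).eq_or_lt with h0 | h0
    · rw [← h0]
      simp
    · have hpos : (0:ℝ) < S.card * probEq p X a := by positivity
      have hlog := Real.log_le_sub_one_of_pos (inv_pos.mpr hpos)
      rw [Real.log_inv, Real.log_mul (ne_of_gt hcard) (ne_of_gt h0)] at hlog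
      have h2 := mul_le_mul_of_nonneg_left hlog (le_of_lt h0)
      have h3 : probEq p X a * (S.card * probEq p X a)⁻¹ = 1 / S.card := by
        field_simp
      nlinarith [h2, h3]
  have hsumkey := Finset.sum_le_sum key
  have hL : ∑ a ∈ S, (probEq p X a - 1 / S.card) = 0 := by
    rw [Finset.sum_sub_distrib, hqs, Finset.sum_const, nsmul_eq_mul]
    field_simp
    ring
  have hR : ∑ a ∈ S, probEq p X a * (Real.log S.card + Real.log (probEq p X a))
      = Real.log S.card + ∑ a ∈ S, probEq p X a * Real.log (probEq p X a) := by
    simp_rw [mul_add]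
    rw [Finset.sum_add_distrib, ← Finset.sum_mul, hqs, one_mul]
  rw [hL, hR] at hsumkey
  have hlog2 : (0:ℝ) < Real.log 2 := Real.log_pos one_lt_two
  rw [entOf_eq_sum p X S hX]
  simp only [Real.logb, ← mul_div_assoc]
  rw [← Finset.sum_div, ← neg_div]
  rw [div_le_div_iff_of_pos_right hlog2]
  linarith

end MaxEnt

section Submod
open Classical
variable {Ω : Type*} [Fintype Ω] {α β γ : Type*}

lemma entOf_eq_log (p : Ω → ℝ) (X : Ω → α) :
    entOf p X = -(∑ ω, p ω * Real.log (probEq p X (X ω))) / Real.log 2 := by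
  unfold entOf
  simp only [Real.logb, ← mul_div_assoc]
  rw [← Finset.sum_div, neg_div]

lemma sum_probEq_pair_left (p : Ω → ℝ) (A : Ω → α) (C : Ω → γ) (c : γ) :
    ∑ a ∈ Finset.image A Finset.univ, probEq p (fun ω => (A ω, C ω)) (a, c)
      = probEq p C c := by
  unfold probEq
  rw [Finset.sum_comm]
  refine Finset.sum_congr rfl fun ω _ => ?_
  by_cases hc : C ω = c
  · simp only [Prod.mk.injEq, hc, and_true, if_pos]
    rw [Finset.sum_ite_eq (Finset.image A Finset.univ) (A ω) (fun _ => p ω),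
      if_pos (Finset.mem_image_of_mem A (Finset.mem_univ ω))]
  · simp [Prod.mk.injEq, hc]

lemma entOf_submod (p : Ω → ℝ) (hp : ∀ ω, 0 ≤ p ω)
    (A : Ω → α) (B : Ω → β) (C : Ω → γ) :
    entOf p (fun ω => (A ω, B ω, C ω)) + entOf p C
      ≤ entOf p (fun ω => (A ω, C ω)) + entOf p (fun ω => (B ω, C ω)) := by
  have hlog2 : (0:ℝ) < Real.log 2 := Real.log_pos one_lt_two
  set F : α × β × γ → ℝ := fun v =>
    probEq p (fun ω => (A ω, C ω)) (v.1, v.2.2)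
      * probEq p (fun ω => (B ω, C ω)) (v.2.1, v.2.2)
      / (probEq p (fun ω => (A ω, B ω, C ω)) v * probEq p C v.2.2) with hF
  have step1 : ∀ ω, p ω * (Real.log (probEq p (fun ω' => (A ω', C ω')) (A ω, C ω))
        + Real.log (probEq p (fun ω' => (B ω', C ω')) (B ω, C ω))
        - Real.log (probEq p (fun ω' => (A ω', B ω', C ω')) (A ω, B ω, C ω))
        - Real.log (probEq p C (C ω)))
      ≤ p ω * F (A ω, B ω, C ω) - p ω := by
    intro ω
    rcases (hp ω).eq_or_lt with h0 | h0
    · simp [← h0]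
    · have h1 : 0 < probEq p (fun ω' => (A ω', C ω')) (A ω, C ω) :=
        lt_of_lt_of_le h0 (le_probEq p hp (fun ω' => (A ω', C ω')) ω)
      have h2 : 0 < probEq p (fun ω' => (B ω', C ω')) (B ω, C ω) :=
        lt_of_lt_of_le h0 (le_probEq p hp (fun ω' => (B ω', C ω')) ω)
      have h3 : 0 < probEq p (fun ω' => (A ω', B ω', C ω')) (A ω, B ω, C ω) :=
        lt_of_lt_of_le h0 (le_probEq p hp (fun ω' => (A ω', B ω', C ω')) ω)
      have h4 : 0 < probEq p C (C ω) := lt_of_lt_of_le h0 (le_probEq p hp C ω)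
      have hFpos : 0 < F (A ω, B ω, C ω) := div_pos (mul_pos h1 h2) (mul_pos h3 h4)
      have hlog := Real.log_le_sub_one_of_pos hFpos
      have hexp : Real.log (F (A ω, B ω, C ω))
          = Real.log (probEq p (fun ω' => (A ω', C ω')) (A ω, C ω))
            + Real.log (probEq p (fun ω' => (B ω', C ω')) (B ω, C ω))
            - Real.log (probEq p (fun ω' => (A ω', B ω', C ω')) (A ω, B ω, C ω))
            - Real.log (probEq p C (C ω)) := by
        rw [hF]
        rw [Real.log_div (by positivity) (by positivity),
          Real.log_mul (ne_of_gt h1) (ne_of_gt h2),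
          Real.log_mul (ne_of_gt h3) (ne_of_gt h4)]
        ring
      rw [hexp] at hlog
      have hmul := mul_le_mul_of_nonneg_left hlog h0.le
      linarith
  -- step 2 : ∑ ω, p ω * F (A ω, B ω, C ω) ≤ ∑ ω, p ω
  set XABC : Ω → α × β × γ := fun ω => (A ω, B ω, C ω) with hXABC
  have hmem : ∀ ω, XABC ω ∈ Finset.image XABC Finset.univ :=
    fun ω => Finset.mem_image_of_mem XABC (Finset.mem_univ ω)
  set G : α × β × γ → ℝ := fun v =>
    probEq p (fun ω => (A ω, C ω)) (v.1, v.2.2)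
      * probEq p (fun ω => (B ω, C ω)) (v.2.1, v.2.2) / probEq p C v.2.2 with hG
  have hGnn : ∀ v, 0 ≤ G v := by
    intro v
    exact div_nonneg (mul_nonneg (probEq_nonneg p hp _ _) (probEq_nonneg p hp _ _))
      (probEq_nonneg p hp _ _)
  have step2 : ∑ ω, p ω * F (XABC ω) ≤ ∑ ω, p ω := by
    rw [← sum_probEq_mul p XABC (Finset.image XABC Finset.univ) hmem F]
    have hpt : ∀ v ∈ Finset.image XABC Finset.univ, probEq p XABC v * F v ≤ G v := by
      intro v _
      rcases (probEq_nonneg p hp XABC v).eq_or_lt with h0 | h0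
      · rw [← h0, zero_mul]; exact hGnn v
      · have hC : 0 < probEq p C v.2.2 :=
          lt_of_lt_of_le h0 (probEq_mono p hp (fun ω he => by rw [← he]))
        refine le_of_eq ?_
        rw [hF, hG]
        field_simp
    refine le_trans (Finset.sum_le_sum hpt) ?_
    have hsub : Finset.image XABC Finset.univ ⊆
        (Finset.image A Finset.univ) ×ˢ ((Finset.image B Finset.univ) ×ˢ (Finset.image C Finset.univ)) := by
      intro v hv
      obtain ⟨ω, -, rfl⟩ := Finset.mem_image.mp hv
      simp [Finset.mem_product, hXABC]
    refine le_trans (Finset.sum_le_sum_of_subset_of_nonneg hsub (fun v _ _ => hGnn v)) ?_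
    rw [Finset.sum_product]
    -- now: ∑ a ∈ IA, ∑ v2 ∈ IB ×ˢ IC, G (a, v2)
    have hinner : ∀ a ∈ Finset.image A Finset.univ,
        ∑ v2 ∈ (Finset.image B Finset.univ) ×ˢ (Finset.image C Finset.univ), G (a, v2)
          = ∑ c ∈ Finset.image C Finset.univ,
              probEq p (fun ω => (A ω, C ω)) (a, c) * probEq p C c / probEq p C c := by
      intro a _
      rw [Finset.sum_product]
      rw [Finset.sum_comm]
      refine Finset.sum_congr rfl fun c _ => ?_
      -- ∑ b ∈ IB, pAC (a,c) * pBC (b,c) / pC c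
      rw [show (∑ b ∈ Finset.image B Finset.univ,
          probEq p (fun ω => (A ω, C ω)) (a, c) * probEq p (fun ω => (B ω, C ω)) (b, c)
            / probEq p C c)
        = probEq p (fun ω => (A ω, C ω)) (a, c)
            * (∑ b ∈ Finset.image B Finset.univ, probEq p (fun ω => (B ω, C ω)) (b, c))
            / probEq p C c from by rw [Finset.mul_sum, Finset.sum_div]]
      rw [sum_probEq_pair_left p B C c]
    rw [Finset.sum_congr rfl hinner, Finset.sum_comm]
    have houter : ∀ c ∈ Finset.image C Finset.univ,
        ∑ a ∈ Finset.image A Finset.univ,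
            probEq p (fun ω => (A ω, C ω)) (a, c) * probEq p C c / probEq p C c
          = probEq p C c := by
      intro c _
      by_cases hc : probEq p C c = 0
      · refine Finset.sum_eq_zero (fun a _ => by rw [hc, div_zero]) |>.trans hc.symm
      · have : ∀ a ∈ Finset.image A Finset.univ,
            probEq p (fun ω => (A ω, C ω)) (a, c) * probEq p C c / probEq p C c
              = probEq p (fun ω => (A ω, C ω)) (a, c) := by
          intro a _
          rw [mul_div_assoc, div_self hc, mul_one]
        rw [Finset.sum_congr rfl this, sum_probEq_pair_left p A C c]
    rw [Finset.sum_congr rfl houter,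
      sum_probEq p C (Finset.image C Finset.univ) (fun ω => Finset.mem_image_of_mem C (Finset.mem_univ ω))]
  -- combine
  have hsum1 := Finset.sum_le_sum (fun ω (_ : ω ∈ Finset.univ) => step1 ω)
  rw [entOf_eq_log, entOf_eq_log, entOf_eq_log, entOf_eq_log]
  rw [← add_div, ← add_div, div_le_div_iff_of_pos_right hlog2]
  have hexpand : ∑ ω, p ω * (Real.log (probEq p (fun ω' => (A ω', C ω')) (A ω, C ω))
        + Real.log (probEq p (fun ω' => (B ω', C ω')) (B ω, C ω))
        - Real.log (probEq p (fun ω' => (A ω', B ω', C ω')) (A ω, B ω, C ω))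
        - Real.log (probEq p C (C ω)))
      = (∑ ω, p ω * Real.log (probEq p (fun ω' => (A ω', C ω')) (A ω, C ω)))
        + (∑ ω, p ω * Real.log (probEq p (fun ω' => (B ω', C ω')) (B ω, C ω)))
        - (∑ ω, p ω * Real.log (probEq p (fun ω' => (A ω', B ω', C ω')) (A ω, B ω, C ω)))
        - (∑ ω, p ω * Real.log (probEq p C (C ω))) := by
    rw [← Finset.sum_add_distrib, ← Finset.sum_sub_distrib, ← Finset.sum_sub_distrib]
    refine Finset.sum_congr rfl fun ω _ => by ring
  have hsum2 : ∑ ω, (p ω * F (XABC ω) - p ω) ≤ 0 := by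
    rw [Finset.sum_sub_distrib]
    have := step2
    linarith
  rw [hexpand] at hsum1
  have := le_trans hsum1 hsum2
  linarith
end Submod

section ProbSet
open Classical
variable {Ω : Type*} [Fintype Ω] {α : Type*}

lemma probSet_nonneg (p : Ω → ℝ) (hp : ∀ ω, 0 ≤ p ω) (S : Set Ω) : 0 ≤ probSet p S := by
  refine Finset.sum_nonneg fun ω _ => ?_
  split_ifs <;> simp [hp ω]

lemma probSet_mono (p : Ω → ℝ) (hp : ∀ ω, 0 ≤ p ω) {S T : Set Ω} (h : S ⊆ T) :
    probSet p S ≤ probSet p T := by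
  refine Finset.sum_le_sum fun ω _ => ?_
  by_cases hS : ω ∈ S
  · rw [if_pos hS, if_pos (h hS)]
  · rw [if_neg hS]; split_ifs <;> simp [hp ω]

lemma probSet_exists_le [Fintype α] (p : Ω → ℝ) (hp : ∀ ω, 0 ≤ p ω) (Q : α → Ω → Prop) :
    probSet p {x | ∃ a, Q a x} ≤ ∑ a, probSet p {x | Q a x} := by
  unfold probSet
  rw [Finset.sum_comm]
  refine Finset.sum_le_sum fun ω _ => ?_
  simp only [Set.mem_setOf_eq]
  by_cases h : ∃ a, Q a ω
  · rw [if_pos h]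
    obtain ⟨a, ha⟩ := h
    have h1 : p ω ≤ (if ω ∈ {x | Q a x} then p ω else 0) := by
      simp only [Set.mem_setOf_eq]; rw [if_pos ha]
    refine le_trans h1 (Finset.single_le_sum (f := fun a => if ω ∈ {x | Q a x} then p ω else 0)
      (fun a _ => by split_ifs <;> simp [hp ω]) (Finset.mem_univ a))
  · rw [if_neg h]
    exact Finset.sum_nonneg fun a _ => by split_ifs <;> simp [hp ω]

lemma probSet_or_le (p : Ω → ℝ) (hp : ∀ ω, 0 ≤ p ω) (Q R : Ω → Prop) :
    probSet p {x | Q x ∨ R x} ≤ probSet p {x | Q x} + probSet p {x | R x} := by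
  unfold probSet
  rw [← Finset.sum_add_distrib]
  refine Finset.sum_le_sum fun ω _ => ?_
  by_cases hQ : Q ω <;> by_cases hR : R ω <;>
    simp only [Set.mem_setOf_eq, hQ, hR, or_self, or_true, true_or, if_true, if_false,
      or_false, false_or] <;> simp [hp ω]

lemma probSet_markov (p : Ω → ℝ) (hp : ∀ ω, 0 ≤ p ω) (f : Ω → ℝ) (hf : ∀ x, 0 ≤ f x)
    {c : ℝ} (hc : 0 < c) :
    probSet p {x | c ≤ f x} ≤ (∑ x, p x * f x) / c := by
  rw [Finset.sum_div]
  refine Finset.sum_le_sum fun x _ => ?_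
  simp only [Set.mem_setOf_eq]
  by_cases h : c ≤ f x
  · rw [if_pos h, le_div_iff₀ hc]
    exact mul_le_mul_of_nonneg_left h (hp x)
  · rw [if_neg h]
    exact div_nonneg (mul_nonneg (hp x) (hf x)) hc.le

end ProbSet

section IIDConc
open Classical
variable {W : Type*} [Fintype W] (Pw : W → ℝ)

lemma sum_pi_prod {n : ℕ} (H : Fin n → W → ℝ) :
    ∑ w : Fin n → W, ∏ t, H t (w t) = ∏ t, ∑ y, H t y := by
  rw [Finset.prod_univ_sum, ← Fintype.piFinset_univ]

lemma prod_extract_one {n : ℕ} (w : Fin n → W) (t : Fin n) (h : W → ℝ) :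
    (∏ s, Pw (w s)) * h (w t) = ∏ s, (Pw (w s) * if s = t then h (w s) else 1) := by
  rw [Finset.prod_mul_distrib]
  congr 1
  rw [Finset.prod_ite_eq' Finset.univ t (fun s => h (w s)), if_pos (Finset.mem_univ t)]

lemma expect_single (hp1 : ∑ y, Pw y = 1) {n : ℕ} (t : Fin n) (h : W → ℝ) :
    ∑ w : Fin n → W, (∏ s, Pw (w s)) * h (w t) = ∑ y, Pw y * h y := by
  have : ∀ w : Fin n → W, (∏ s, Pw (w s)) * h (w t)
      = ∏ s, (Pw (w s) * if s = t then h (w s) else 1) := fun w => prod_extract_one Pw w t h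
  rw [Finset.sum_congr rfl fun w _ => this w]
  rw [sum_pi_prod (fun s y => Pw y * if s = t then h y else 1)]
  have : ∀ s : Fin n, (∑ y, Pw y * if s = t then h y else 1)
      = if s = t then (∑ y, Pw y * h y) else 1 := by
    intro s
    by_cases hs : s = t
    · simp [hs]
    · simp [hs, hp1]
  rw [Finset.prod_congr rfl fun s _ => this s]
  rw [Finset.prod_ite_eq' Finset.univ t (fun _ => ∑ y, Pw y * h y), if_pos (Finset.mem_univ t)]

lemma expect_pair (hp1 : ∑ y, Pw y = 1) {n : ℕ} {t s : Fin n} (hts : t ≠ s) (h h' : W → ℝ) :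
    ∑ w : Fin n → W, (∏ r, Pw (w r)) * (h (w t) * h' (w s))
      = (∑ y, Pw y * h y) * (∑ y, Pw y * h' y) := by
  have key : ∀ w : Fin n → W, (∏ r, Pw (w r)) * (h (w t) * h' (w s))
      = ∏ r, (Pw (w r) * (if r = t then h (w r) else 1) * (if r = s then h' (w r) else 1)) := by
    intro w
    rw [Finset.prod_mul_distrib, Finset.prod_mul_distrib]
    rw [Finset.prod_ite_eq' Finset.univ t (fun r => h (w r)), if_pos (Finset.mem_univ t)]
    rw [Finset.prod_ite_eq' Finset.univ s (fun r => h' (w r)), if_pos (Finset.mem_univ s)]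
    ring
  rw [Finset.sum_congr rfl fun w _ => key w]
  rw [sum_pi_prod (fun r y => Pw y * (if r = t then h y else 1) * (if r = s then h' y else 1))]
  have hval : ∀ r : Fin n, (∑ y, Pw y * (if r = t then h y else 1) * (if r = s then h' y else 1))
      = if r = t then (∑ y, Pw y * h y) else if r = s then (∑ y, Pw y * h' y) else 1 := by
    intro r
    by_cases hrt : r = t
    · have hrs : r ≠ s := by rw [hrt]; exact hts
      simp [hrt, hrs, hts]
    · by_cases hrs : r = s
      · have hst : s ≠ t := fun hh => hts hh.symm
        simp [hrt, hrs, hst]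
      · simp [hrt, hrs, hp1]
  rw [Finset.prod_congr rfl fun r _ => hval r]
  rw [← Finset.mul_prod_erase Finset.univ _ (Finset.mem_univ t), if_pos rfl]
  have hs_mem : s ∈ Finset.univ.erase t := Finset.mem_erase.mpr ⟨fun h => hts h.symm, Finset.mem_univ s⟩
  rw [← Finset.mul_prod_erase _ _ hs_mem, if_neg (fun h => hts h.symm), if_pos rfl]
  rw [Finset.prod_eq_one, mul_one]
  intro r hr
  have h1 := Finset.mem_erase.mp hr
  have h2 := Finset.mem_erase.mp h1.2
  rw [if_neg h2.1, if_neg h1.1]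
end IIDConc

section Conc2
open Classical
variable {W : Type*} [Fintype W] (Pw : W → ℝ)

lemma Ncount_cast {n : ℕ} (w : Fin n → W) (a : W) :
    ((Ncount w a : ℕ) : ℝ) = ∑ t, if w t = a then (1:ℝ) else 0 := by
  unfold Ncount
  rw [Finset.card_filter, Nat.cast_sum]
  exact Finset.sum_congr rfl fun t _ => by split_ifs <;> simp

lemma expect_Ncount (hp1 : ∑ y, Pw y = 1) {n : ℕ} (a : W) :
    ∑ w : Fin n → W, (∏ s, Pw (w s)) * ((Ncount w a : ℝ)) = n * Pw a := by
  simp_rw [Ncount_cast, Finset.mul_sum]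
  rw [Finset.sum_comm]
  rw [Finset.sum_congr rfl fun t _ => expect_single Pw hp1 t (fun y => if y = a then (1:ℝ) else 0)]
  have hv : (∑ y, Pw y * if y = a then (1:ℝ) else 0) = Pw a := by
    rw [Finset.sum_congr rfl (fun y (_ : y ∈ Finset.univ) => by rw [mul_ite, mul_one, mul_zero])]
    rw [Finset.sum_ite_eq' Finset.univ a Pw, if_pos (Finset.mem_univ a)]
  rw [Finset.sum_congr rfl fun t _ => hv]
  simp [mul_comm]

lemma var_Ncount (hp0 : ∀ y, 0 ≤ Pw y) (hp1 : ∑ y, Pw y = 1) {n : ℕ} (a : W) :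
    ∑ w : Fin n → W, (∏ s, Pw (w s)) * (((Ncount w a : ℝ)) - n * Pw a)^2 ≤ n := by
  set h : W → ℝ := fun y => (if y = a then (1:ℝ) else 0) - Pw a with hh
  have hPa0 : 0 ≤ Pw a := hp0 a
  have hPa1 : Pw a ≤ 1 := by
    rw [← hp1]; exact Finset.single_le_sum (fun y _ => hp0 y) (Finset.mem_univ a)
  have hdiff : ∀ w : Fin n → W, ((Ncount w a : ℝ)) - n * Pw a = ∑ t, h (w t) := by
    intro w
    rw [Ncount_cast, hh]
    rw [Finset.sum_sub_distrib]
    simp [Finset.sum_const, Finset.card_univ, mul_comm]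
  have hsq : ∀ w : Fin n → W, (((Ncount w a : ℝ)) - n * Pw a)^2 = ∑ t, ∑ s, h (w t) * h (w s) := by
    intro w; rw [hdiff, sq, Finset.sum_mul_sum]
  have hstep : ∑ w : Fin n → W, (∏ s, Pw (w s)) * (((Ncount w a : ℝ)) - n * Pw a)^2
      = ∑ t : Fin n, ∑ s : Fin n, ∑ w : Fin n → W, (∏ r, Pw (w r)) * (h (w t) * h (w s)) := by
    rw [Finset.sum_congr rfl fun w _ => by rw [hsq w, Finset.mul_sum]]
    rw [Finset.sum_comm]
    refine Finset.sum_congr rfl fun t _ => ?_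
    rw [Finset.sum_congr rfl fun w (_ : w ∈ Finset.univ) => Finset.mul_sum _ _ _]
    rw [Finset.sum_comm]
  rw [hstep]
  have hEh : (∑ y, Pw y * h y) = 0 := by
    rw [hh]
    simp_rw [mul_sub]
    rw [Finset.sum_sub_distrib, ← Finset.sum_mul, hp1, one_mul]
    rw [Finset.sum_congr rfl (fun y (_ : y ∈ Finset.univ) => by rw [mul_ite, mul_one, mul_zero])]
    rw [Finset.sum_ite_eq' Finset.univ a Pw, if_pos (Finset.mem_univ a)]
    ring
  have hbound : ∀ t s : Fin n, ∑ w : Fin n → W, (∏ r, Pw (w r)) * (h (w t) * h (w s))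
      ≤ if t = s then 1 else 0 := by
    intro t s
    by_cases hts : t = s
    · subst hts
      rw [if_pos rfl]
      rw [expect_single Pw hp1 t (fun y => h y * h y)]
      calc ∑ y, Pw y * (h y * h y) ≤ ∑ y, Pw y := by
            refine Finset.sum_le_sum fun y _ => ?_
            have : h y * h y ≤ 1 := by
              rw [hh]; dsimp only; split_ifs <;> nlinarith
            nlinarith [hp0 y]
        _ = 1 := hp1
    · rw [if_neg hts, expect_pair Pw hp1 hts h h, hEh, zero_mul]
  calc ∑ t : Fin n, ∑ s : Fin n, ∑ w : Fin n → W, (∏ r, Pw (w r)) * (h (w t) * h (w s))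
      ≤ ∑ t : Fin n, ∑ s : Fin n, (if t = s then (1:ℝ) else 0) :=
        Finset.sum_le_sum fun t _ => Finset.sum_le_sum fun s _ => hbound t s
    _ = n := by
        rw [Finset.sum_congr rfl fun t (_ : t ∈ Finset.univ) => by
          rw [Finset.sum_ite_eq Finset.univ t (fun _ => (1:ℝ)), if_pos (Finset.mem_univ t)]]
        simp

lemma atypical_bound (hp0 : ∀ y, 0 ≤ Pw y) (hp1 : ∑ y, Pw y = 1) {n : ℕ} (hn : 0 < n) :
    probSet (fun w : Fin n → W => ∏ t, Pw (w t)) ((typicalSet Pw (μseq n) n)ᶜ)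
      ≤ (Fintype.card W) * (n:ℝ) ^ (-(1/3:ℝ)) := by
  have hpW : ∀ w : Fin n → W, 0 ≤ ∏ t, Pw (w t) :=
    fun w => Finset.prod_nonneg fun t _ => hp0 (w t)
  have hn0 : (0:ℝ) < n := by exact_mod_cast hn
  have hμ : 0 < μseq n := Real.rpow_pos_of_pos hn0 _
  have hsub : (typicalSet Pw (μseq n) n)ᶜ ⊆
      {w | ∃ a, (¬ (|((Ncount w a : ℝ)) / n - Pw a| ≤ μseq n)) ∨ (Pw a = 0 ∧ Ncount w a ≠ 0)} := by
    intro w hw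
    simp only [typicalSet, Set.mem_compl_iff, Set.mem_setOf_eq, not_forall] at hw ⊢
    obtain ⟨a, ha⟩ := hw
    exact ⟨a, by tauto⟩
  refine le_trans (probSet_mono _ hpW hsub) ?_
  refine le_trans (probSet_exists_le _ hpW _) ?_
  have hterm : ∀ a : W, probSet (fun w : Fin n → W => ∏ t, Pw (w t))
      {w | (¬ (|((Ncount w a : ℝ)) / n - Pw a| ≤ μseq n)) ∨ (Pw a = 0 ∧ Ncount w a ≠ 0)}
      ≤ (n:ℝ) ^ (-(1/3:ℝ)) := by
    intro a
    refine le_trans (probSet_or_le _ hpW _ _) ?_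
    have h1 : probSet (fun w : Fin n → W => ∏ t, Pw (w t))
        {w | ¬ (|((Ncount w a : ℝ)) / n - Pw a| ≤ μseq n)} ≤ (n:ℝ) ^ (-(1/3:ℝ)) := by
      have hsub1 : {w : Fin n → W | ¬ (|((Ncount w a : ℝ)) / n - Pw a| ≤ μseq n)}
          ⊆ {w | ((n:ℝ) * μseq n)^2 ≤ (((Ncount w a : ℝ)) - n * Pw a)^2} := by
        intro w hw
        simp only [Set.mem_setOf_eq, not_le] at hw ⊢
        have habs : |((Ncount w a : ℝ)) - n * Pw a| = n * |((Ncount w a : ℝ)) / n - Pw a| := by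
          rw [← abs_of_pos hn0, ← abs_mul]
          congr 1
          field_simp
          rw [abs_of_pos hn0]; ring
        have h2 : (n:ℝ) * μseq n ≤ |((Ncount w a : ℝ)) - n * Pw a| := by
          rw [habs]
          exact mul_le_mul_of_nonneg_left hw.le hn0.le
        calc ((n:ℝ) * μseq n)^2 ≤ |((Ncount w a : ℝ)) - n * Pw a|^2 := by
              apply pow_le_pow_left₀ (by positivity) h2
          _ = (((Ncount w a : ℝ)) - n * Pw a)^2 := sq_abs _
      refine le_trans (probSet_mono _ hpW hsub1) ?_
      have hc : (0:ℝ) < ((n:ℝ) * μseq n)^2 := by positivity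
      refine le_trans (probSet_markov _ hpW _ (fun w => sq_nonneg _) hc) ?_
      have hvar := var_Ncount Pw hp0 hp1 (n := n) (a := a)
      refine le_trans ((div_le_div_iff_of_pos_right hc).mpr hvar) (le_of_eq ?_)
      have h2 : ((n:ℝ) * μseq n)^2 = (n:ℝ) ^ ((4:ℝ)/3) := by
        unfold μseq
        rw [mul_pow, ← Real.rpow_natCast ((n:ℝ) ^ (-(1/3:ℝ))) 2, ← Real.rpow_mul hn0.le,
          ← Real.rpow_natCast (n:ℝ) 2, ← Real.rpow_add hn0]
        norm_num
      rw [h2, div_eq_iff (by positivity), ← Real.rpow_add hn0,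
        show (-(1/3:ℝ) + 4/3) = 1 by norm_num, Real.rpow_one]
    have h2 : probSet (fun w : Fin n → W => ∏ t, Pw (w t))
        {w | Pw a = 0 ∧ Ncount w a ≠ 0} ≤ 0 := by
      by_cases hPa : Pw a = 0
      · have hsub2 : {w : Fin n → W | Pw a = 0 ∧ Ncount w a ≠ 0}
            ⊆ {w | (1:ℝ) ≤ ((Ncount w a : ℝ))} := by
          intro w hw
          simp only [Set.mem_setOf_eq] at hw ⊢
          exact_mod_cast Nat.one_le_iff_ne_zero.mpr hw.2
        refine le_trans (probSet_mono _ hpW hsub2) ?_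
        refine le_trans (probSet_markov _ hpW _ (fun w => by positivity) one_pos) ?_
        rw [div_one, expect_Ncount Pw hp1 a, hPa, mul_zero]
      · refine le_of_eq (Finset.sum_eq_zero fun w _ => ?_)
        rw [if_neg]
        simp only [Set.mem_setOf_eq, not_and]
        exact fun h => absurd h hPa
    linarith [probSet_nonneg (fun w : Fin n → W => ∏ t, Pw (w t)) hpW
      {w | ¬ (|((Ncount w a : ℝ)) / n - Pw a| ≤ μseq n)}]
  refine le_trans (Finset.sum_le_sum fun a (_ : a ∈ Finset.univ) => hterm a) ?_
  rw [Finset.sum_const, Finset.card_univ, nsmul_eq_mul]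
end Conc2

section Timed
open Classical
variable {Θ : Type*} [Fintype Θ] {δ : Type*}

lemma probEq_fst (pt : Θ → ℝ) {n : ℕ} (hn : 0 < n) (f : Θ → δ) (a : δ) :
    probEq (fun ω : Θ × Fin n => pt ω.1 / n) (fun ω => f ω.1) a = probEq pt f a := by
  unfold probEq
  rw [Fintype.sum_prod_type]
  dsimp only
  have hn0 : (n:ℝ) ≠ 0 := by positivity
  refine Finset.sum_congr rfl fun θ _ => ?_
  split_ifs with h
  · rw [Finset.sum_const, Finset.card_univ, Fintype.card_fin, nsmul_eq_mul]
    field_simp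
  · simp

lemma entOf_fst (pt : Θ → ℝ) {n : ℕ} (hn : 0 < n) (f : Θ → δ) :
    entOf (fun ω : Θ × Fin n => pt ω.1 / n) (fun ω => f ω.1) = entOf pt f := by
  unfold entOf
  rw [Fintype.sum_prod_type]
  dsimp only
  have hn0 : (n:ℝ) ≠ 0 := by positivity
  congr 1
  refine Finset.sum_congr rfl fun θ _ => ?_
  rw [Finset.sum_congr rfl (fun t (_ : t ∈ Finset.univ) => by
    rw [probEq_fst pt hn f (f θ)])]
  rw [Finset.sum_const, Finset.card_univ, Fintype.card_fin, nsmul_eq_mul]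
  field_simp

lemma probEq_timed (pt : Θ → ℝ) {n : ℕ} (V : Fin n → Θ → δ) (t : Fin n) (θ : Θ) :
    probEq (fun ω : Θ × Fin n => pt ω.1 / n) (fun ω => (V ω.2 ω.1, ω.2)) (V t θ, t)
      = probEq pt (V t) (V t θ) / n := by
  unfold probEq
  rw [Fintype.sum_prod_type]
  dsimp only
  trans (∑ θ' : Θ, ∑ t' : Fin n, if t' = t then (if V t θ' = V t θ then pt θ' / (n:ℝ) else 0) else 0)
  · refine Finset.sum_congr rfl fun θ' _ => Finset.sum_congr rfl fun t' _ => ?_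
    by_cases ht : t' = t
    · subst ht
      simp [Prod.ext_iff]
    · simp [Prod.ext_iff, ht]
  rw [Finset.sum_congr rfl fun θ' (_ : θ' ∈ Finset.univ) =>
    Finset.sum_ite_eq' Finset.univ t (fun _ => if V t θ' = V t θ then pt θ' / (n:ℝ) else 0)]
  simp only [Finset.mem_univ, if_true]
  rw [Finset.sum_div]
  exact Finset.sum_congr rfl fun θ' _ => by split_ifs <;> simp

lemma entOf_timed (pt : Θ → ℝ) (hp : ∀ θ, 0 ≤ pt θ) (hsum : ∑ θ, pt θ = 1) {n : ℕ} (hn : 0 < n)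
    (V : Fin n → Θ → δ) :
    entOf (fun ω : Θ × Fin n => pt ω.1 / n) (fun ω => (V ω.2 ω.1, ω.2))
      = Real.logb 2 n + (1 / n) * ∑ t : Fin n, entOf pt (V t) := by
  have hn0 : (0:ℝ) < n := by exact_mod_cast hn
  have hnne : (n:ℝ) ≠ 0 := ne_of_gt hn0
  unfold entOf
  rw [Fintype.sum_prod_type]
  dsimp only
  have hterm : ∀ θ : Θ, ∀ t : Fin n,
      pt θ / n * Real.logb 2 (probEq (fun ω : Θ × Fin n => pt ω.1 / n)
          (fun ω => (V ω.2 ω.1, ω.2)) (V t θ, t))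
        = pt θ / n * Real.logb 2 (probEq pt (V t) (V t θ)) - pt θ / n * Real.logb 2 n := by
    intro θ t
    rw [probEq_timed]
    rcases (hp θ).eq_or_lt with h0 | h0
    · rw [← h0]; simp
    · have hq : 0 < probEq pt (V t) (V t θ) := lt_of_lt_of_le h0 (le_probEq pt hp (V t) θ)
      rw [Real.logb_div (ne_of_gt hq) hnne, mul_sub]
  rw [Finset.sum_congr rfl fun θ (_ : θ ∈ Finset.univ) =>
    Finset.sum_congr rfl fun t (_ : t ∈ Finset.univ) => hterm θ t]
  rw [Finset.sum_congr rfl fun θ (_ : θ ∈ Finset.univ) => Finset.sum_sub_distrib _ _]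
  rw [Finset.sum_sub_distrib, neg_sub]
  have hB : ∑ θ : Θ, ∑ _t : Fin n, pt θ / n * Real.logb 2 n = Real.logb 2 n := by
    rw [Finset.sum_congr rfl fun θ (_ : θ ∈ Finset.univ) => by
      rw [Finset.sum_const, Finset.card_univ, Fintype.card_fin, nsmul_eq_mul]]
    have hx : ∀ θ : Θ, (n:ℝ) * (pt θ / n * Real.logb 2 n) = pt θ * Real.logb 2 n := by
      intro θ; field_simp
    rw [Finset.sum_congr rfl fun θ _ => hx θ, ← Finset.sum_mul, hsum, one_mul]
  have hA : ∑ θ : Θ, ∑ t : Fin n, pt θ / n * Real.logb 2 (probEq pt (V t) (V t θ))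
      = -((1:ℝ) / n * ∑ t : Fin n, entOf pt (V t)) := by
    rw [Finset.sum_comm]
    have hx : ∀ t : Fin n, ∑ θ, pt θ / n * Real.logb 2 (probEq pt (V t) (V t θ))
        = (1:ℝ)/n * ∑ θ, pt θ * Real.logb 2 (probEq pt (V t) (V t θ)) := by
      intro t; rw [Finset.mul_sum]; exact Finset.sum_congr rfl fun θ _ => by ring
    rw [Finset.sum_congr rfl fun t _ => hx t, ← Finset.mul_sum]
    have hy : (∑ t : Fin n, entOf pt (V t))
        = -∑ t : Fin n, ∑ θ, pt θ * Real.logb 2 (probEq pt (V t) (V t θ)) := by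
      rw [← Finset.sum_neg_distrib]
      exact Finset.sum_congr rfl fun t _ => rfl
    rw [hy]
    ring
  rw [hA, hB, sub_neg_eq_add]
  exact congrArg _ (congrArg _ (Finset.sum_congr rfl fun t _ => rfl))
end Timed


section ProbSet2
open Classical
variable {Ω : Type*} [Fintype Ω]

lemma probSet_add_compl (p : Ω → ℝ) (S : Set Ω) :
    probSet p S + probSet p Sᶜ = ∑ ω, p ω := by
  unfold probSet
  rw [← Finset.sum_add_distrib]
  refine Finset.sum_congr rfl fun ω _ => ?_
  by_cases h : ω ∈ S <;> simp [h]

lemma probSet_inter_ge (p : Ω → ℝ) (hp : ∀ ω, 0 ≤ p ω) (A B : Set Ω) :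
    probSet p A - probSet p Bᶜ ≤ probSet p (A ∩ B) := by
  unfold probSet
  rw [← Finset.sum_sub_distrib]
  refine Finset.sum_le_sum fun ω _ => ?_
  by_cases hA : ω ∈ A <;> by_cases hB : ω ∈ B <;>
    simp only [Set.mem_inter_iff, Set.mem_compl_iff, hA, hB, not_true, not_false_iff,
      if_true, if_false, and_self, true_and, false_and] <;>
    simp [hp ω]

lemma probSet_le_sum (p : Ω → ℝ) (hp : ∀ ω, 0 ≤ p ω) (S : Set Ω) :
    probSet p S ≤ ∑ ω, p ω := by
  refine Finset.sum_le_sum fun ω _ => ?_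
  split_ifs <;> simp [hp ω]

end ProbSet2

noncomputable def preFun (k : ℕ) (Y : ℕ → Type) (n m : ℕ)
    (ys : ∀ i : Fin (k + 1), Fin n → Y i) : ∀ i : Fin (k + 1), Fin n → Option (Y i) :=
  fun i t => if (t : ℕ) < m then some (ys i t) else none

section KHopAux
open Classical
variable (k : ℕ) (Y : ℕ → Type) [∀ i, Fintype (Y i)] [∀ i, Nonempty (Y i)]
variable (P : (∀ i : Fin (k + 1), Y i) → ℝ)

lemma iidK_nonneg (hP0 : ∀ y, 0 ≤ P y) (n : ℕ) (ys : ∀ i : Fin (k + 1), Fin n → Y i) :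
    0 ≤ iidK k Y P n ys :=
  Finset.prod_nonneg fun t _ => hP0 _

lemma sum_tupleSeq (n : ℕ) (F : (Fin n → ∀ i : Fin (k + 1), Y i) → ℝ) :
    ∑ ys : ∀ i : Fin (k + 1), Fin n → Y i, F (tupleSeq k Y ys)
      = ∑ w : Fin n → ∀ i : Fin (k + 1), Y i, F w :=
  Equiv.sum_comp (Equiv.piComm fun (i : Fin (k + 1)) (_ : Fin n) => Y i) F

lemma sum_iidK (hP1 : ∑ y, P y = 1) (n : ℕ) :
    ∑ ys : ∀ i : Fin (k + 1), Fin n → Y i, iidK k Y P n ys = 1 := by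
  have h := sum_tupleSeq k Y n (fun w => ∏ t, P (w t))
  calc ∑ ys : ∀ i : Fin (k + 1), Fin n → Y i, iidK k Y P n ys
      = ∑ w : Fin n → ∀ i : Fin (k + 1), Y i, ∏ t, P (w t) := h
    _ = ∏ t : Fin n, ∑ y, P y := sum_pi_prod (fun _ => P)
    _ = 1 := by simp [hP1]

lemma probSet_tup (n : ℕ) (S : Set (Fin n → ∀ i : Fin (k + 1), Y i)) :
    probSet (iidK k Y P n) {ys | tupleSeq k Y ys ∈ S}
      = probSet (fun w : Fin n → (∀ i : Fin (k + 1), Y i) => ∏ t, P (w t)) S :=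
  sum_tupleSeq k Y n (fun w => if w ∈ S then ∏ t, P (w t) else 0)

lemma DeltaCM_nonneg (hP0 : ∀ y, 0 ≤ P y) (n : ℕ) (φ : ∀ ℓ : ℕ, (Fin n → Y ℓ) → ℕ → ℕ)
    (g : (Fin n → Y k) → ℕ → Bool) : 0 ≤ DeltaCM k Y P n φ g :=
  probSet_nonneg _ (iidK_nonneg k Y P hP0 n) _

lemma alphaCM_le_one (hP0 : ∀ y, 0 ≤ P y) (hP1 : ∑ y, P y = 1) (n : ℕ)
    (φ : ∀ ℓ : ℕ, (Fin n → Y ℓ) → ℕ → ℕ) (g : (Fin n → Y k) → ℕ → Bool) :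
    alphaCM k Y P n φ g ≤ 1 := by
  have := probSet_le_sum (iidK k Y P n) (iidK_nonneg k Y P hP0 n) ((acceptSet k Y n φ g)ᶜ)
  rw [sum_iidK k Y P hP1 n] at this
  exact this

lemma alphaCM_nonneg (hP0 : ∀ y, 0 ≤ P y) (n : ℕ) (φ : ∀ ℓ : ℕ, (Fin n → Y ℓ) → ℕ → ℕ)
    (g : (Fin n → Y k) → ℕ → Bool) : 0 ≤ alphaCM k Y P n φ g :=
  probSet_nonneg _ (iidK_nonneg k Y P hP0 n) _

lemma Delta_lb (hP0 : ∀ y, 0 ≤ P y) (hP1 : ∑ y, P y = 1) {n : ℕ} (hn : 0 < n)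
    (φ : ∀ ℓ : ℕ, (Fin n → Y ℓ) → ℕ → ℕ) (g : (Fin n → Y k) → ℕ → Bool) :
    1 - alphaCM k Y P n φ g
      - (Fintype.card (∀ i : Fin (k + 1), Y i)) * (n:ℝ) ^ (-(1/3:ℝ))
      ≤ DeltaCM k Y P n φ g := by
  have hiid0 : ∀ ys, 0 ≤ iidK k Y P n ys := iidK_nonneg k Y P hP0 n
  have h1 : probSet (iidK k Y P n) (acceptSet k Y n φ g) = 1 - alphaCM k Y P n φ g := by
    have hc := probSet_add_compl (iidK k Y P n) (acceptSet k Y n φ g)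
    rw [sum_iidK k Y P hP1 n] at hc
    unfold alphaCM
    linarith
  have h2 : probSet (iidK k Y P n) ({ys | tupleSeq k Y ys ∈ typicalSet P (μseq n) n})ᶜ
      ≤ (Fintype.card (∀ i : Fin (k + 1), Y i)) * (n:ℝ) ^ (-(1/3:ℝ)) := by
    have heq : ({ys : ∀ i : Fin (k + 1), Fin n → Y i |
        tupleSeq k Y ys ∈ typicalSet P (μseq n) n})ᶜ
        = {ys | tupleSeq k Y ys ∈ (typicalSet P (μseq n) n)ᶜ} := rfl
    rw [heq, probSet_tup k Y P n ((typicalSet P (μseq n) n)ᶜ)]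
    exact atypical_bound P hP0 hP1 hn
  have h3 := probSet_inter_ge (iidK k Y P n) hiid0 (acceptSet k Y n φ g)
    {ys | tupleSeq k Y ys ∈ typicalSet P (μseq n) n}
  unfold DeltaCM DsetCM
  linarith

lemma ptilde_nonneg (hP0 : ∀ y, 0 ≤ P y) (n : ℕ) (φ : ∀ ℓ : ℕ, (Fin n → Y ℓ) → ℕ → ℕ)
    (g : (Fin n → Y k) → ℕ → Bool) (ys : ∀ i : Fin (k + 1), Fin n → Y i) :
    0 ≤ ptildeCM k Y P n φ g ys := by
  unfold ptildeCM
  split_ifs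
  · exact div_nonneg (iidK_nonneg k Y P hP0 n ys) (DeltaCM_nonneg k Y P hP0 n φ g)
  · exact le_refl 0

lemma ptilde_sum (n : ℕ) (φ : ∀ ℓ : ℕ, (Fin n → Y ℓ) → ℕ → ℕ)
    (g : (Fin n → Y k) → ℕ → Bool) (hΔ : DeltaCM k Y P n φ g ≠ 0) :
    ∑ ys, ptildeCM k Y P n φ g ys = 1 := by
  unfold ptildeCM
  have hsp : ∀ ys : ∀ i : Fin (k + 1), Fin n → Y i,
      (if ys ∈ DsetCM k Y P n φ g then iidK k Y P n ys / DeltaCM k Y P n φ g else 0)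
        = (if ys ∈ DsetCM k Y P n φ g then iidK k Y P n ys else 0) / DeltaCM k Y P n φ g := by
    intro ys; split_ifs <;> simp
  rw [Finset.sum_congr rfl fun ys _ => hsp ys, ← Finset.sum_div]
  have hD : (∑ ys, if ys ∈ DsetCM k Y P n φ g then iidK k Y P n ys else 0)
      = DeltaCM k Y P n φ g := rfl
  rw [hD, div_self hΔ]

lemma ptilde_support {n : ℕ} {φ : ∀ ℓ : ℕ, (Fin n → Y ℓ) → ℕ → ℕ}
    {g : (Fin n → Y k) → ℕ → Bool} {ys : ∀ i : Fin (k + 1), Fin n → Y i}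
    (h : ptildeCM k Y P n φ g ys ≠ 0) :
    ys ∈ DsetCM k Y P n φ g ∧ iidK k Y P n ys ≠ 0 := by
  unfold ptildeCM at h
  split_ifs at h with hD
  · exact ⟨hD, fun h0 => h (by rw [h0, zero_div])⟩
  · exact absurd rfl h

end KHopAux

section KHopIdent
open Classical
variable (k : ℕ) (Y : ℕ → Type) [∀ i, Fintype (Y i)] [∀ i, Nonempty (Y i)]
variable (P : (∀ i : Fin (k + 1), Y i) → ℝ)

lemma pre_succ_iff {n : ℕ} (ys ys' : ∀ i : Fin (k + 1), Fin n → Y i) (t : Fin n) :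
    (preFun k Y n ((t : ℕ) + 1) ys = preFun k Y n ((t : ℕ) + 1) ys')
      ↔ (preFun k Y n (t : ℕ) ys = preFun k Y n (t : ℕ) ys'
          ∧ (fun i => ys i t) = (fun i => ys' i t)) := by
  constructor
  · intro h
    constructor
    · funext i s
      have hs := congrFun (congrFun h i) s
      by_cases hlt : (s : ℕ) < (t : ℕ)
      · have hlt1 : (s : ℕ) < (t : ℕ) + 1 := Nat.lt_succ_of_lt hlt
        simpa [preFun, hlt, hlt1] using hs
      · simp [preFun, hlt]
    · funext i
      have hs := congrFun (congrFun h i) t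
      simpa [preFun, Nat.lt_succ_self] using hs
  · rintro ⟨h1, h2⟩
    funext i s
    by_cases hlt : (s : ℕ) < (t : ℕ) + 1
    · rcases Nat.lt_succ_iff_lt_or_eq.mp hlt with hlt' | heq
      · have := congrFun (congrFun h1 i) s
        simpa [preFun, hlt, hlt'] using this
      · have hst : s = t := Fin.ext heq
        subst hst
        have := congrFun h2 i
        simpa [preFun, hlt] using this
    · simp [preFun, hlt]

lemma khop_identity (hP0 : ∀ y, 0 ≤ P y) {n : ℕ} (hn : 0 < n)
    (φ : ∀ ℓ : ℕ, (Fin n → Y ℓ) → ℕ → ℕ) (g : (Fin n → Y k) → ℕ → Bool)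
    (hΔ : DeltaCM k Y P n φ g ≠ 0) (j : ℕ) :
    entOf (pfullCM k Y P n φ g) (MtilRV k Y n φ j)
      - n * miOf (pfullCM k Y P n φ g) (fun ω => (fun i : Fin (k + 1) => ω.1 i ω.2))
          (UvarCM k Y n φ j)
      - Real.logb 2 (DeltaCM k Y P n φ g)
    = (-∑ ys, ptildeCM k Y P n φ g ys * Real.logb 2 (iidK k Y P n ys))
      - n * entOf (pfullCM k Y P n φ g) (fun ω => (fun i : Fin (k + 1) => ω.1 i ω.2)) := by
  have hn0 : (n : ℝ) ≠ 0 := by positivity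
  set pt := ptildeCM k Y P n φ g with hpt
  have hpt0 : ∀ ys, 0 ≤ pt ys := ptilde_nonneg k Y P hP0 n φ g
  have hpt1 : ∑ ys, pt ys = 1 := ptilde_sum k Y P n φ g hΔ
  set Mf : (∀ i : Fin (k + 1), Fin n → Y i) → ℕ :=
    fun ys => msgRec Y n φ (extendTup k Y n ys) j with hMf
  set Hm : ℕ → ℝ := fun m => entOf pt (fun ys => (Mf ys, preFun k Y n m ys)) with hHm
  have hM : entOf (pfullCM k Y P n φ g) (MtilRV k Y n φ j) = entOf pt Mf :=
    entOf_fst pt hn Mf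
  have hUvar : ∀ ω : (∀ i : Fin (k + 1), Fin n → Y i) × Fin n,
      UvarCM k Y n φ j ω = (Mf ω.1, preFun k Y n (ω.2 : ℕ) ω.1, ω.2) := fun ω => rfl
  have hU : entOf (pfullCM k Y P n φ g) (UvarCM k Y n φ j)
      = Real.logb 2 n + (1 / n) * ∑ t : Fin n, Hm (t : ℕ) := by
    have h1 : entOf (pfullCM k Y P n φ g) (UvarCM k Y n φ j)
        = entOf (fun ω : (∀ i : Fin (k + 1), Fin n → Y i) × Fin n => pt ω.1 / n)
            (fun ω => ((Mf ω.1, preFun k Y n (ω.2 : ℕ) ω.1), ω.2)) := by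
      refine entOf_congr _ fun ω ω' => ?_
      rw [hUvar ω, hUvar ω']
      simp only [Prod.ext_iff]
      tauto
    rw [h1]
    exact entOf_timed pt hpt0 hpt1 hn (fun t ys => (Mf ys, preFun k Y n (t : ℕ) ys))
  have hXU : entOf (pfullCM k Y P n φ g)
      (fun ω => ((fun i : Fin (k + 1) => ω.1 i ω.2), UvarCM k Y n φ j ω))
      = Real.logb 2 n + (1 / n) * ∑ t : Fin n, Hm ((t : ℕ) + 1) := by
    have h2 : entOf (pfullCM k Y P n φ g)
        (fun ω => ((fun i : Fin (k + 1) => ω.1 i ω.2), UvarCM k Y n φ j ω))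
        = entOf (fun ω : (∀ i : Fin (k + 1), Fin n → Y i) × Fin n => pt ω.1 / n)
            (fun ω => ((Mf ω.1, preFun k Y n ((ω.2 : ℕ) + 1) ω.1), ω.2)) := by
      refine entOf_congr _ fun ω ω' => ?_
      obtain ⟨ys, t⟩ := ω
      obtain ⟨ys', t'⟩ := ω'
      rw [hUvar ⟨ys, t⟩, hUvar ⟨ys', t'⟩]
      simp only [Prod.ext_iff]
      constructor
      · rintro ⟨hX, hMe, hpre, ht⟩
        have ht' : t = t' := ht
        subst ht'
        exact ⟨⟨hMe, (pre_succ_iff k Y ys ys' t).mpr ⟨hpre, hX⟩⟩, rfl⟩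
      · rintro ⟨⟨hMe, hpre1⟩, ht⟩
        have ht' : t = t' := ht
        subst ht'
        obtain ⟨hpre, hX⟩ := (pre_succ_iff k Y ys ys' t).mp hpre1
        exact ⟨hX, hMe, hpre, rfl⟩
    rw [h2]
    exact entOf_timed pt hpt0 hpt1 hn (fun t ys => (Mf ys, preFun k Y n ((t : ℕ) + 1) ys))
  have htel : ∑ t : Fin n, Hm ((t : ℕ) + 1) - ∑ t : Fin n, Hm (t : ℕ) = Hm n - Hm 0 := by
    rw [← Finset.sum_sub_distrib]
    rw [Fin.sum_univ_eq_sum_range (fun m => Hm (m + 1) - Hm m) n]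
    exact Finset.sum_range_sub Hm n
  have hHmn : Hm n = entOf pt (fun ys => ys) := by
    refine entOf_congr pt fun ys ys' => ?_
    simp only [Prod.ext_iff]
    constructor
    · rintro ⟨-, hpre⟩
      funext i s
      have := congrFun (congrFun hpre i) s
      simpa [preFun, s.isLt] using this
    · intro h
      subst h
      exact ⟨rfl, rfl⟩
  have hHm0 : Hm 0 = entOf pt Mf := by
    refine entOf_congr pt fun ys ys' => ?_
    simp only [Prod.ext_iff]
    constructor
    · rintro ⟨hMe, -⟩
      exact hMe
    · intro h
      refine ⟨h, ?_⟩
      funext i s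
      simp [preFun]
  have hid : entOf pt (fun ys => ys)
      = Real.logb 2 (DeltaCM k Y P n φ g)
        + (-∑ ys, pt ys * Real.logb 2 (iidK k Y P n ys)) := by
    have hpe : ∀ ys : ∀ i : Fin (k + 1), Fin n → Y i,
        probEq pt (fun y => y) ys = pt ys := by
      intro ys
      simp only [probEq]
      exact (Finset.sum_eq_single ys (fun b _ hb => if_neg hb)
        (fun h => absurd (Finset.mem_univ ys) h)).trans (if_pos rfl)
    unfold entOf
    rw [Finset.sum_congr rfl fun ys (_ : ys ∈ Finset.univ) => by rw [hpe ys]]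
    have hterm : ∀ ys : ∀ i : Fin (k + 1), Fin n → Y i,
        pt ys * Real.logb 2 (pt ys)
          = pt ys * Real.logb 2 (iidK k Y P n ys)
            - pt ys * Real.logb 2 (DeltaCM k Y P n φ g) := by
      intro ys
      rcases eq_or_ne (pt ys) 0 with h0 | h0
      · rw [h0]; ring
      · obtain ⟨hD, hiid⟩ := ptilde_support k Y P h0
        have hptval : pt ys = iidK k Y P n ys / DeltaCM k Y P n φ g := by
          rw [hpt]
          unfold ptildeCM
          rw [if_pos hD]
        rw [hptval, Real.logb_div hiid hΔ, mul_sub]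
    rw [Finset.sum_congr rfl fun ys _ => hterm ys, Finset.sum_sub_distrib,
      ← Finset.sum_mul, hpt1, one_mul, neg_sub]
    ring
  simp only [miOf]
  rw [hM, hU, hXU]
  have e1 : (n:ℝ) * ((1:ℝ)/n * (∑ t : Fin n, Hm (t : ℕ))) = ∑ t : Fin n, Hm (t : ℕ) := by
    field_simp
  have e2 : (n:ℝ) * ((1:ℝ)/n * (∑ t : Fin n, Hm ((t : ℕ) + 1))) = ∑ t : Fin n, Hm ((t : ℕ) + 1) := by
    field_simp
  have hHmnval := hHmn
  rw [hid] at hHmnval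
  have expand : (n:ℝ) * (entOf (pfullCM k Y P n φ g) (fun ω => (fun i : Fin (k + 1) => ω.1 i ω.2))
      + (Real.logb 2 n + 1 / n * ∑ t : Fin n, Hm (t : ℕ))
      - (Real.logb 2 n + 1 / n * ∑ t : Fin n, Hm ((t : ℕ) + 1)))
      = n * entOf (pfullCM k Y P n φ g) (fun ω => (fun i : Fin (k + 1) => ω.1 i ω.2))
        + (∑ t : Fin n, Hm (t : ℕ)) - (∑ t : Fin n, Hm ((t : ℕ) + 1)) := by
    field_simp
    ring
  linarith [htel, hHmnval, hHm0, expand]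
end KHopIdent

section KHopBounds
open Classical
variable (k : ℕ) (Y : ℕ → Type) [∀ i, Fintype (Y i)] [∀ i, Nonempty (Y i)]
variable (P : (∀ i : Fin (k + 1), Y i) → ℝ)

lemma count_group {W : Type*} [Fintype W] {n : ℕ} (w : Fin n → W) (f : W → ℝ) :
    ∑ t, f (w t) = ∑ a, (Ncount w a : ℝ) * f a := by
  have h1 : ∀ a : W, (Ncount w a : ℝ) * f a = ∑ t, if w t = a then f a else 0 := by
    intro a
    rw [Ncount_cast, Finset.sum_mul]
    refine Finset.sum_congr rfl fun t _ => by split_ifs <;> simp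
  rw [Finset.sum_congr rfl fun a (_ : a ∈ Finset.univ) => h1 a, Finset.sum_comm]
  refine Finset.sum_congr rfl fun t _ => ?_
  exact ((Finset.sum_eq_single (w t) (fun b _ hb => if_neg fun hc => hb hc.symm)
    (fun h => absurd (Finset.mem_univ (w t)) h)).trans (if_pos rfl)).symm

lemma logb_iid_bound (hP0 : ∀ y, 0 ≤ P y) {n : ℕ} (hn : 0 < n)
    {ys : ∀ i : Fin (k + 1), Fin n → Y i}
    (htyp : tupleSeq k Y ys ∈ typicalSet P (μseq n) n)
    (hiid : iidK k Y P n ys ≠ 0) :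
    |(- Real.logb 2 (iidK k Y P n ys)) - n * (-∑ a, P a * Real.logb 2 (P a))|
      ≤ n * μseq n * ∑ a, |Real.logb 2 (P a)| := by
  have hn0 : (0:ℝ) < n := by exact_mod_cast hn
  set w := tupleSeq k Y ys with hw
  have hfac : ∀ t ∈ Finset.univ, P (w t) ≠ 0 := by
    intro t _
    have hne : (∏ t, P (w t)) ≠ 0 := hiid
    exact fun h => hne (Finset.prod_eq_zero (Finset.mem_univ t) h)
  have hlog : Real.logb 2 (iidK k Y P n ys) = ∑ t, Real.logb 2 (P (w t)) := by
    show Real.logb 2 (∏ t, P (w t)) = ∑ t, Real.logb 2 (P (w t))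
    simp only [Real.logb]
    rw [Real.log_prod hfac, Finset.sum_div]
  rw [hlog, count_group w (fun a => Real.logb 2 (P a))]
  have heq : (-∑ a, (Ncount w a : ℝ) * Real.logb 2 (P a))
        - n * (-∑ a, P a * Real.logb 2 (P a))
      = ∑ a, (((n:ℝ) * P a - (Ncount w a : ℝ)) * Real.logb 2 (P a)) := by
    rw [mul_neg, Finset.mul_sum, sub_neg_eq_add, ← Finset.sum_neg_distrib,
      ← Finset.sum_add_distrib]
    exact Finset.sum_congr rfl fun a _ => by ring
  rw [heq]
  refine le_trans (Finset.abs_sum_le_sum_abs _ _) ?_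
  rw [Finset.mul_sum]
  refine Finset.sum_le_sum fun a _ => ?_
  rw [abs_mul]
  refine mul_le_mul_of_nonneg_right ?_ (abs_nonneg _)
  have h1 := (htyp a).1
  have habs : |(n:ℝ) * P a - (Ncount w a : ℝ)|
      = n * |((Ncount w a : ℝ)) / n - P a| := by
    rw [← abs_of_pos hn0, ← abs_mul, ← abs_neg]
    congr 1
    field_simp
    rw [abs_of_pos hn0]; ring
  rw [habs]
  exact mul_le_mul_of_nonneg_left h1 hn0.le

lemma En_bound (hP0 : ∀ y, 0 ≤ P y) {n : ℕ} (hn : 0 < n)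
    (φ : ∀ ℓ : ℕ, (Fin n → Y ℓ) → ℕ → ℕ) (g : (Fin n → Y k) → ℕ → Bool)
    (hΔ : DeltaCM k Y P n φ g ≠ 0) :
    |(-∑ ys, ptildeCM k Y P n φ g ys * Real.logb 2 (iidK k Y P n ys))
        - n * (-∑ a, P a * Real.logb 2 (P a))|
      ≤ n * μseq n * ∑ a, |Real.logb 2 (P a)| := by
  set pt := ptildeCM k Y P n φ g with hpt
  have hpt0 : ∀ ys, 0 ≤ pt ys := ptilde_nonneg k Y P hP0 n φ g
  have hpt1 : ∑ ys, pt ys = 1 := ptilde_sum k Y P n φ g hΔ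
  set Hp := -∑ a, P a * Real.logb 2 (P a) with hHp
  have hrw : ∑ ys, pt ys * (-(Real.logb 2 (iidK k Y P n ys)) - n * Hp)
      = (-∑ ys, pt ys * Real.logb 2 (iidK k Y P n ys)) - n * Hp := by
    calc ∑ ys, pt ys * (-(Real.logb 2 (iidK k Y P n ys)) - n * Hp)
        = ∑ ys, (-(pt ys * Real.logb 2 (iidK k Y P n ys)) - pt ys * (n * Hp)) :=
          Finset.sum_congr rfl fun ys _ => by ring
      _ = (-∑ ys, pt ys * Real.logb 2 (iidK k Y P n ys)) - (∑ ys, pt ys) * (n * Hp) := by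
          rw [Finset.sum_sub_distrib, Finset.sum_neg_distrib, ← Finset.sum_mul]
      _ = (-∑ ys, pt ys * Real.logb 2 (iidK k Y P n ys)) - n * Hp := by
          rw [hpt1, one_mul]
  rw [← hrw]
  refine le_trans (Finset.abs_sum_le_sum_abs _ _) ?_
  have hterm : ∀ ys, |pt ys * (-(Real.logb 2 (iidK k Y P n ys)) - n * Hp)|
      ≤ pt ys * (n * μseq n * ∑ a, |Real.logb 2 (P a)|) := by
    intro ys
    rcases eq_or_ne (pt ys) 0 with h0 | h0
    · rw [h0, zero_mul, zero_mul, abs_zero]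
    · obtain ⟨hD, hiid⟩ := ptilde_support k Y P h0
      have htyp : tupleSeq k Y ys ∈ typicalSet P (μseq n) n := hD.2
      rw [abs_mul, abs_of_nonneg (hpt0 ys)]
      exact mul_le_mul_of_nonneg_left
        (logb_iid_bound k Y P hP0 hn htyp hiid) (hpt0 ys)
  refine le_trans (Finset.sum_le_sum fun ys _ => hterm ys) ?_
  rw [← Finset.sum_mul, hpt1, one_mul]

lemma q_bound (hP0 : ∀ y, 0 ≤ P y) {n : ℕ} (hn : 0 < n)
    (φ : ∀ ℓ : ℕ, (Fin n → Y ℓ) → ℕ → ℕ) (g : (Fin n → Y k) → ℕ → Bool)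
    (hΔ : DeltaCM k Y P n φ g ≠ 0) (a : ∀ i : Fin (k + 1), Y i) :
    |probEq (pfullCM k Y P n φ g)
        (fun ω => (fun i : Fin (k + 1) => ω.1 i ω.2)) a - P a| ≤ μseq n := by
  have hn0 : (0:ℝ) < n := by exact_mod_cast hn
  set pt := ptildeCM k Y P n φ g with hpt
  have hpt0 : ∀ ys, 0 ≤ pt ys := ptilde_nonneg k Y P hP0 n φ g
  have hpt1 : ∑ ys, pt ys = 1 := ptilde_sum k Y P n φ g hΔ
  have hq : probEq (pfullCM k Y P n φ g)
      (fun ω => (fun i : Fin (k + 1) => ω.1 i ω.2)) a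
      = ∑ ys, pt ys * ((Ncount (tupleSeq k Y ys) a : ℝ) / n) := by
    unfold probEq
    rw [Fintype.sum_prod_type]
    refine Finset.sum_congr rfl fun ys _ => ?_
    trans ((Ncount (tupleSeq k Y ys) a : ℝ) * (pt ys / ↑n))
    · rw [Ncount_cast, Finset.sum_mul]
      refine Finset.sum_congr rfl fun t _ => ?_
      split_ifs with h1 h2 h3
      · rw [one_mul]
        rfl
      · exact absurd h1 h2
      · exact absurd h3 h1
      · rw [zero_mul]
    · ring
  rw [hq]
  have hrw : ∑ ys, pt ys * ((Ncount (tupleSeq k Y ys) a : ℝ) / n) - P a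
      = ∑ ys, pt ys * ((Ncount (tupleSeq k Y ys) a : ℝ) / n - P a) := by
    calc ∑ ys, pt ys * ((Ncount (tupleSeq k Y ys) a : ℝ) / n) - P a
        = ∑ ys, pt ys * ((Ncount (tupleSeq k Y ys) a : ℝ) / n) - (∑ ys, pt ys) * P a := by
          rw [hpt1, one_mul]
      _ = ∑ ys, (pt ys * ((Ncount (tupleSeq k Y ys) a : ℝ) / n) - pt ys * P a) := by
          rw [Finset.sum_sub_distrib, ← Finset.sum_mul]
      _ = ∑ ys, pt ys * ((Ncount (tupleSeq k Y ys) a : ℝ) / n - P a) :=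
          Finset.sum_congr rfl fun ys _ => by ring
  rw [hrw]
  refine le_trans (Finset.abs_sum_le_sum_abs _ _) ?_
  have hterm : ∀ ys, |pt ys * ((Ncount (tupleSeq k Y ys) a : ℝ) / n - P a)|
      ≤ pt ys * μseq n := by
    intro ys
    rcases eq_or_ne (pt ys) 0 with h0 | h0
    · rw [h0, zero_mul, zero_mul, abs_zero]
    · obtain ⟨hD, -⟩ := ptilde_support k Y P h0
      have htyp := hD.2 a
      rw [abs_mul, abs_of_nonneg (hpt0 ys)]
      exact mul_le_mul_of_nonneg_left htyp.1 (hpt0 ys)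
  refine le_trans (Finset.sum_le_sum fun ys _ => hterm ys) ?_
  rw [← Finset.sum_mul, hpt1, one_mul]
end KHopBounds

/-- message-entropy bound under the `K`-hop change of measure. With
`U_ℓ := (M̃_ℓ, Ỹ₀^{T−1},…,Ỹ_k^{T−1}, T)` (here `ℓ = j+1`), for every `ℓ ∈ {1,…,k}`
there is a correction term `o(n)` with `o(n)/n → 0` such that
`H(M̃_ℓ) = n·I(Ỹ₀,…,Ỹ_k; U_ℓ) + log Δ_k + o(n)`, and consequently
`n·R_ℓ ≥ H(M̃_ℓ) ≥ n·I(U_ℓ; Ỹ_{ℓ−1}) + log Δ_k + o(n)`. -/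
theorem khop_message_entropy_bound
    (k : ℕ) (Y : ℕ → Type) [∀ i, Fintype (Y i)] [∀ i, Nonempty (Y i)]
    (hk : 1 ≤ k)
    (P : (∀ i : Fin (k + 1), Y i) → ℝ) (hP : IsPMF P) (hMC : IsMarkovChainK k Y P)
    (εk : ℝ) (hε0 : 0 ≤ εk) (hε1 : εk < 1)
    (Rr : Fin k → ℝ) (hR : ∀ j, 0 ≤ Rr j)
    (φ : ∀ n : ℕ, ∀ ℓ : ℕ, (Fin n → Y ℓ) → ℕ → ℕ)
    (g : ∀ n : ℕ, (Fin n → Y k) → ℕ → Bool)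
    (hrate : ∀ n : ℕ, ∀ j : Fin k, ∀ ys : ∀ i : Fin (k + 1), Fin n → Y i,
        ((msgRec Y n (φ n) (extendTup k Y n ys) (j : ℕ) : ℕ) : ℝ) + 1
          ≤ 2 ^ ((n : ℝ) * Rr j))
    (hα : limsup (fun n => alphaCM k Y P n (φ n) (g n)) atTop ≤ εk) :
    ∀ j : Fin k, ∃ o : ℕ → ℝ,
      Tendsto (fun n => o n / n) atTop (nhds 0) ∧
      ∀ n : ℕ,
        entOf (pfullCM k Y P n (φ n) (g n)) (MtilRV k Y n (φ n) (j : ℕ))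
            = n * miOf (pfullCM k Y P n (φ n) (g n))
                (fun ω => (fun i : Fin (k + 1) => ω.1 i ω.2))
                (UvarCM k Y n (φ n) (j : ℕ))
              + Real.logb 2 (DeltaCM k Y P n (φ n) (g n)) + o n ∧
        entOf (pfullCM k Y P n (φ n) (g n)) (MtilRV k Y n (φ n) (j : ℕ))
            ≤ (n : ℝ) * Rr j ∧
        n * miOf (pfullCM k Y P n (φ n) (g n))
              (UvarCM k Y n (φ n) (j : ℕ))
              (fun ω => ω.1 (idxLo k j) ω.2)
            + Real.logb 2 (DeltaCM k Y P n (φ n) (g n)) + o n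
          ≤ entOf (pfullCM k Y P n (φ n) (g n)) (MtilRV k Y n (φ n) (j : ℕ)) := by
  classical
  obtain ⟨hP0, hP1⟩ := hP
  intro j
  set o : ℕ → ℝ := fun n =>
    entOf (pfullCM k Y P n (φ n) (g n)) (MtilRV k Y n (φ n) (j : ℕ))
      - n * miOf (pfullCM k Y P n (φ n) (g n))
          (fun ω => (fun i : Fin (k + 1) => ω.1 i ω.2)) (UvarCM k Y n (φ n) (j : ℕ))
      - Real.logb 2 (DeltaCM k Y P n (φ n) (g n)) with ho
  have hrate' : ∀ n : ℕ,
      entOf (pfullCM k Y P n (φ n) (g n)) (MtilRV k Y n (φ n) (j : ℕ)) ≤ (n : ℝ) * Rr j := by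
    intro n
    rcases Nat.eq_zero_or_pos n with hn0 | hn
    · subst hn0
      have hz : entOf (pfullCM k Y P 0 (φ 0) (g 0)) (MtilRV k Y 0 (φ 0) (j : ℕ)) = 0 := by
        unfold entOf
        rw [Finset.univ_eq_empty, Finset.sum_empty, neg_zero]
      rw [hz]
      simp
    · by_cases hΔ0 : DeltaCM k Y P n (φ n) (g n) = 0
      · have hz : ∀ ω : (∀ i : Fin (k + 1), Fin n → Y i) × Fin n,
            pfullCM k Y P n (φ n) (g n) ω = 0 := by
          intro ω
          unfold pfullCM ptildeCM
          rw [hΔ0]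
          split_ifs <;> simp
        have h0 : entOf (pfullCM k Y P n (φ n) (g n)) (MtilRV k Y n (φ n) (j : ℕ)) = 0 := by
          unfold entOf
          rw [Finset.sum_eq_zero (fun ω _ => by rw [hz ω, zero_mul]), neg_zero]
        rw [h0]
        exact mul_nonneg (Nat.cast_nonneg n) (hR j)
      · have hn0 : (n : ℝ) ≠ 0 := by positivity
        have hpnn : ∀ ω : (∀ i : Fin (k + 1), Fin n → Y i) × Fin n,
            0 ≤ pfullCM k Y P n (φ n) (g n) ω := fun ω =>
          div_nonneg (ptilde_nonneg k Y P hP0 n (φ n) (g n) ω.1) (Nat.cast_nonneg n)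
        have hpfsum : ∑ ω : (∀ i : Fin (k + 1), Fin n → Y i) × Fin n,
            pfullCM k Y P n (φ n) (g n) ω = 1 := by
          rw [Fintype.sum_prod_type]
          refine Eq.trans (Finset.sum_congr rfl fun ys _ => ?_)
            (ptilde_sum k Y P n (φ n) (g n) hΔ0)
          calc (∑ t : Fin n, pfullCM k Y P n (φ n) (g n) (ys, t))
              = ∑ _t : Fin n, ptildeCM k Y P n (φ n) (g n) ys / n := rfl
            _ = ptildeCM k Y P n (φ n) (g n) ys := by
                rw [Finset.sum_const, Finset.card_univ, Fintype.card_fin, nsmul_eq_mul]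
                field_simp
        have hmem : ∀ ω : (∀ i : Fin (k + 1), Fin n → Y i) × Fin n,
            MtilRV k Y n (φ n) (j : ℕ) ω
              ∈ Finset.range (⌊(2:ℝ) ^ ((n:ℝ) * Rr j)⌋₊) := by
          intro ω
          have h2 : msgRec Y n (φ n) (extendTup k Y n ω.1) (j : ℕ) + 1
              ≤ ⌊(2:ℝ) ^ ((n:ℝ) * Rr j)⌋₊ :=
            Nat.le_floor (by exact_mod_cast hrate n j ω.1)
          exact Finset.mem_range.mpr (Nat.lt_of_succ_le h2)
        have hone : (1:ℝ) ≤ (2:ℝ) ^ ((n:ℝ) * Rr j) :=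
          Real.one_le_rpow one_le_two (mul_nonneg (Nat.cast_nonneg n) (hR j))
        have hcard : 0 < (Finset.range (⌊(2:ℝ) ^ ((n:ℝ) * Rr j)⌋₊)).card := by
          rw [Finset.card_range]
          have h1 : (1:ℕ) ≤ ⌊(2:ℝ) ^ ((n:ℝ) * Rr j)⌋₊ := Nat.le_floor (by exact_mod_cast hone)
          omega
        have hent := entOf_le_logb_card (pfullCM k Y P n (φ n) (g n)) hpnn hpfsum
          (MtilRV k Y n (φ n) (j : ℕ)) _ hmem hcard
        refine le_trans hent ?_
        rw [Finset.card_range]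
        have hle : (⌊(2:ℝ) ^ ((n:ℝ) * Rr j)⌋₊ : ℝ) ≤ (2:ℝ) ^ ((n:ℝ) * Rr j) :=
          Nat.floor_le (by positivity)
        have hpos : (0:ℝ) < (⌊(2:ℝ) ^ ((n:ℝ) * Rr j)⌋₊ : ℝ) := by
          have h1 : (1:ℕ) ≤ ⌊(2:ℝ) ^ ((n:ℝ) * Rr j)⌋₊ := Nat.le_floor (by exact_mod_cast hone)
          exact_mod_cast h1
        calc Real.logb 2 (⌊(2:ℝ) ^ ((n:ℝ) * Rr j)⌋₊ : ℝ)
            ≤ Real.logb 2 ((2:ℝ) ^ ((n:ℝ) * Rr j)) :=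
              (Real.logb_le_logb one_lt_two hpos (Real.rpow_pos_of_pos two_pos _)).mpr hle
          _ = (n:ℝ) * Rr j := Real.logb_rpow two_pos (by norm_num)
  have hdpi : ∀ n : ℕ,
      miOf (pfullCM k Y P n (φ n) (g n)) (UvarCM k Y n (φ n) (j : ℕ))
          (fun ω => ω.1 (idxLo k j) ω.2)
        ≤ miOf (pfullCM k Y P n (φ n) (g n))
            (fun ω => (fun i : Fin (k + 1) => ω.1 i ω.2)) (UvarCM k Y n (φ n) (j : ℕ)) := by
    intro n
    have hpnn : ∀ ω : (∀ i : Fin (k + 1), Fin n → Y i) × Fin n,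
        0 ≤ pfullCM k Y P n (φ n) (g n) ω := fun ω =>
      div_nonneg (ptilde_nonneg k Y P hP0 n (φ n) (g n) ω.1) (Nat.cast_nonneg n)
    have hsub := entOf_submod (pfullCM k Y P n (φ n) (g n)) hpnn
      (UvarCM k Y n (φ n) (j : ℕ)) (fun ω => (fun i : Fin (k + 1) => ω.1 i ω.2))
      (fun ω => ω.1 (idxLo k j) ω.2)
    have e1 : entOf (pfullCM k Y P n (φ n) (g n))
        (fun ω => (UvarCM k Y n (φ n) (j : ℕ) ω,
          (fun i : Fin (k + 1) => ω.1 i ω.2), ω.1 (idxLo k j) ω.2))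
        = entOf (pfullCM k Y P n (φ n) (g n))
          (fun ω => ((fun i : Fin (k + 1) => ω.1 i ω.2), UvarCM k Y n (φ n) (j : ℕ) ω)) := by
      refine entOf_congr _ fun ω ω' => ?_
      simp only [Prod.ext_iff]
      constructor
      · rintro ⟨hu, hx, -⟩
        exact ⟨hx, hu⟩
      · rintro ⟨hx, hu⟩
        exact ⟨hu, hx, congrFun hx (idxLo k j)⟩
    have e2 : entOf (pfullCM k Y P n (φ n) (g n))
        (fun ω => ((fun i : Fin (k + 1) => ω.1 i ω.2), ω.1 (idxLo k j) ω.2))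
        = entOf (pfullCM k Y P n (φ n) (g n))
          (fun ω => (fun i : Fin (k + 1) => ω.1 i ω.2)) := by
      refine entOf_congr _ fun ω ω' => ?_
      simp only [Prod.ext_iff]
      constructor
      · rintro ⟨hx, -⟩
        exact hx
      · intro hx
        exact ⟨hx, congrFun hx (idxLo k j)⟩
    rw [e1, e2] at hsub
    simp only [miOf]
    linarith
  refine ⟨o, ?_, fun n => ⟨by simp only [ho]; ring, ?_, ?_⟩⟩
  · have hμ0 : Tendsto μseq atTop (nhds 0) :=
      (tendsto_rpow_neg_atTop (by norm_num : (0:ℝ) < 1/3)).comp tendsto_natCast_atTop_atTop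
    set Cc : ℝ := ∑ a, |Real.logb 2 (P a)| with hCc
    set Hp : ℝ := -∑ a, P a * Real.logb 2 (P a) with hHp
    set q : ℕ → (∀ i : Fin (k + 1), Y i) → ℝ := fun n a =>
      probEq (pfullCM k Y P n (φ n) (g n))
        (fun ω => (fun i : Fin (k + 1) => ω.1 i ω.2)) a with hq
    set HX : ℕ → ℝ := fun n =>
      entOf (pfullCM k Y P n (φ n) (g n))
        (fun ω => (fun i : Fin (k + 1) => ω.1 i ω.2)) with hHX
    have hαbd : IsBoundedUnder (· ≤ ·) atTop (fun n => alphaCM k Y P n (φ n) (g n)) :=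
      isBoundedUnder_of ⟨1, fun n => alphaCM_le_one k Y P hP0 hP1 n (φ n) (g n)⟩
    have hαev : ∀ᶠ n in atTop, alphaCM k Y P n (φ n) (g n) < (1 + εk) / 2 :=
      eventually_lt_of_limsup_lt (lt_of_le_of_lt hα (by linarith)) hαbd
    have hbad0 : Tendsto (fun n => (Fintype.card (∀ i : Fin (k + 1), Y i) : ℝ) * μseq n)
        atTop (nhds 0) := by
      have h := hμ0.const_mul (Fintype.card (∀ i : Fin (k + 1), Y i) : ℝ)
      simpa using h
    have hbadev := hbad0.eventually_lt_const (show (0:ℝ) < (1 - εk) / 4 by linarith)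
    have hΔev : ∀ᶠ n in atTop, 0 < n ∧ DeltaCM k Y P n (φ n) (g n) ≠ 0 := by
      filter_upwards [hαev, hbadev, Filter.eventually_gt_atTop 0] with n h1 h2 h3
      refine ⟨h3, fun h0 => ?_⟩
      have hlb := Delta_lb k Y P hP0 hP1 h3 (φ n) (g n)
      have hee : (Fintype.card (∀ i : Fin (k + 1), Y i) : ℝ) * (n:ℝ) ^ (-(1/3:ℝ))
          = (Fintype.card (∀ i : Fin (k + 1), Y i) : ℝ) * μseq n := rfl
      rw [h0, hee] at hlb
      linarith
    have hHXval : ∀ n, HX n = -∑ a, q n a * Real.logb 2 (q n a) := fun n =>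
      entOf_eq_sum _ _ Finset.univ (fun ω => Finset.mem_univ _)
    have hqte : ∀ a : ∀ i : Fin (k + 1), Y i,
        Tendsto (fun n => q n a) atTop (nhds (P a)) := by
      intro a
      rw [tendsto_iff_dist_tendsto_zero]
      refine squeeze_zero' (Filter.Eventually.of_forall fun n => dist_nonneg) ?_ hμ0
      filter_upwards [hΔev] with n hn
      rw [Real.dist_eq]
      exact q_bound k Y P hP0 hn.1 (φ n) (g n) hn.2 a
    have hcont : Continuous fun x : ℝ => x * Real.log x / Real.log 2 :=
      Real.continuous_mul_log.div_const _
    have hHXte : Tendsto HX atTop (nhds Hp) := by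
      have hterm : ∀ a : ∀ i : Fin (k + 1), Y i,
          Tendsto (fun n => q n a * Real.logb 2 (q n a)) atTop
            (nhds (P a * Real.logb 2 (P a))) := by
        intro a
        have h := (hcont.tendsto (P a)).comp (hqte a)
        simpa [Function.comp_def, Real.logb, mul_div_assoc] using h
      have hsum := tendsto_finset_sum Finset.univ
        (fun (a : ∀ i : Fin (k + 1), Y i) _ => hterm a)
      have hneg := hsum.neg
      rw [hHp]
      exact Tendsto.congr (fun n => (hHXval n).symm) hneg
    have hG : Tendsto (fun n => Cc * μseq n + |HX n - Hp|) atTop (nhds 0) := by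
      have h1 := hμ0.const_mul Cc
      have h2 := (hHXte.sub (tendsto_const_nhds (x := Hp))).abs
      rw [sub_self, abs_zero] at h2
      have h3 := h1.add h2
      simpa using h3
    have hkey : ∀ᶠ n in atTop, |o n / n| ≤ Cc * μseq n + |HX n - Hp| := by
      filter_upwards [hΔev] with n hn
      obtain ⟨hnpos, hΔn⟩ := hn
      have hn0 : (0:ℝ) < n := by exact_mod_cast hnpos
      have hid := khop_identity k Y P hP0 hnpos (φ n) (g n) hΔn j
      have hEn := En_bound k Y P hP0 hnpos (φ n) (g n) hΔn
      have hoeq : o n = (-∑ ys, ptildeCM k Y P n (φ n) (g n) ys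
            * Real.logb 2 (iidK k Y P n ys)) - n * HX n := by
        simp only [ho]
        exact hid
      rw [hoeq]
      set En := -∑ ys, ptildeCM k Y P n (φ n) (g n) ys * Real.logb 2 (iidK k Y P n ys)
        with hEnd
      have hdiv : (En - n * HX n) / n = (En / n - Hp) + (Hp - HX n) := by
        rw [sub_div, mul_div_cancel_left₀ _ (ne_of_gt hn0)]
        ring
      rw [hdiv]
      refine le_trans (abs_add_le _ _) (add_le_add ?_ ?_)
      · have h1 : En / n - Hp = (En - n * Hp) / n := by
          rw [sub_div, mul_div_cancel_left₀ _ (ne_of_gt hn0)]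
        rw [h1, abs_div, abs_of_pos hn0, div_le_iff₀ hn0]
        calc |En - ↑n * Hp| ≤ ↑n * μseq n * Cc := hEn
          _ = Cc * μseq n * ↑n := by ring
      · rw [abs_sub_comm]
    have habs : Tendsto (fun n => |o n / n|) atTop (nhds 0) :=
      squeeze_zero' (Filter.Eventually.of_forall fun n => abs_nonneg _) hkey hG
    have hnegabs : Tendsto (fun n => -|o n / n|) atTop (nhds 0) := by
      have h := habs.neg
      simpa using h
    exact tendsto_of_tendsto_of_tendsto_of_le_of_le' hnegabs habs
      (Filter.Eventually.of_forall fun n => neg_abs_le _)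
      (Filter.Eventually.of_forall fun n => le_abs_self _)
  · exact hrate' n
  · have h := hdpi n
    have h2 := mul_le_mul_of_nonneg_left h (Nat.cast_nonneg n : (0:ℝ) ≤ n)
    simp only [ho]
    linarith
end
end
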